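/- arXiv:1906.02895 — 5 statements merged into one kernel-verified Lean document; each statement's English description precedes it below -/
import Mathlib

section
/- Let G be a finite simple graph on at least one vertex, let T be the vertex set of an attached star in G, and let H = G − T. Then Eρ(G) − 1 < Eρ(H) ≤ Eρ(G) − 1 + 2^{1−|T|}. -/
open scoped Classical

namespace AvgCutRank

variable {V : Type*} {W : Type*}

/-- Local complementation of `G` at a vertex `v`: complement the adjacency inside
the neighborhood of `v`. -/
def localComp (G : SimpleGraph V) (v : V) : SimpleGraph V where
  Adj x y := x ≠ y ∧ (G.Adj x y ↔ ¬(G.Adj v x ∧ G.Adj v y))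
  symm := ⟨by
    rintro x y ⟨hxy, h⟩
    refine ⟨hxy.symm, ?_⟩
    rw [G.adj_comm y x, and_comm]
    exact h⟩
  loopless := ⟨fun x h => h.1 rfl⟩

/-- Two graphs on the same vertex set are locally equivalent if one is obtained from
the other by a sequence of local complementations. -/
def LocallyEquivalent (G H : SimpleGraph V) : Prop :=
  Relation.ReflTransGen (fun A B => ∃ v, B = localComp A v) G H

/-- `H` is (isomorphic to) a vertex-minor of `G`: `H` is isomorphic to an induced
subgraph of a graph locally equivalent to `G`. -/
def IsVertexMinor (H : SimpleGraph W) (G : SimpleGraph V) : Prop :=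
  ∃ (G' : SimpleGraph V) (s : Set V), LocallyEquivalent G G' ∧ Nonempty (H ≃g G'.induce s)

/-- The cut-rank of a set `X` of vertices: the rank over GF(2) of the `X × Xᶜ`
adjacency submatrix. -/
noncomputable def cutRank [Fintype V] [DecidableEq V] (G : SimpleGraph V)
    (X : Finset V) : ℕ :=
  (Matrix.of fun (i : X) (j : (Xᶜ : Finset V)) =>
    if G.Adj i.1 j.1 then (1 : ZMod 2) else 0).rank

/-- The average cut-rank of a graph. -/
noncomputable def avgCutRank [Fintype V] [DecidableEq V] (G : SimpleGraph V) : ℝ :=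
  (∑ X : Finset V, (cutRank G X : ℝ)) / 2 ^ Fintype.card V

/-- The maximum cut-rank of a graph. -/
noncomputable def maxCutRank [Fintype V] [DecidableEq V] (G : SimpleGraph V) : ℕ :=
  Finset.univ.sup (cutRank G)

/-- `x` and `y` are equal or twins: they have the same neighbors outside `{x, y}`. -/
def TwinEq (G : SimpleGraph V) (x y : V) : Prop :=
  x = y ∨ ∀ z, z ≠ x → z ≠ y → (G.Adj x z ↔ G.Adj y z)

/-- `x` and `y` are twins. -/
def IsTwins (G : SimpleGraph V) (x y : V) : Prop :=
  x ≠ y ∧ ∀ z, z ≠ x → z ≠ y → (G.Adj x z ↔ G.Adj y z)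

/-- Neighborhood diversity: the number of twin classes. -/
noncomputable def nd [Fintype V] [DecidableEq V] (G : SimpleGraph V) : ℕ :=
  (Finset.univ.image fun x => Finset.univ.filter fun y => TwinEq G x y).card

/-- The minimum rank of a graph over a field `F`. -/
noncomputable def minRank (F : Type*) [Field F] [Fintype V] [DecidableEq V]
    (G : SimpleGraph V) : ℕ :=
  sInf { r : ℕ | ∃ A : Matrix V V F, A.IsSymm ∧
    (∀ i j, i ≠ j → (A i j ≠ 0 ↔ G.Adj i j)) ∧ A.rank = r }

/-- The clique delta-cover number: the minimum `t` such that the edge set of `G` is the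
symmetric difference of the edge sets of `t` complete graphs (given by their vertex sets). -/
noncomputable def cliqueDeltaCover [Fintype V] [DecidableEq V] (G : SimpleGraph V) : ℕ :=
  sInf { t : ℕ | ∃ S : Fin t → Finset V, ∀ x y : V, x ≠ y →
    (G.Adj x y ↔ Odd (Finset.univ.filter fun i => x ∈ S i ∧ y ∈ S i).card) }

/-- `C` is the vertex set of an attached star in `G`: the subgraph induced on `C` is a
star (with center `c`) all of whose noncentral vertices are leaves of `G`. -/
def IsAttachedStar (G : SimpleGraph V) (C : Set V) : Prop :=
  ∃ c ∈ C, (∃ x ∈ C, x ≠ c) ∧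
    ∀ x ∈ C, x ≠ c → G.Adj c x ∧ ∀ y, G.Adj x y → y = c

/-- Deletion of a vertex: the induced subgraph on the complement of `{v}`. -/
def deleteVert (G : SimpleGraph V) (v : V) : SimpleGraph {w : V // w ≠ v} :=
  SimpleGraph.comap Subtype.val G

/-- Deletion of a finite set of vertices. -/
def deleteVerts (G : SimpleGraph V) (T : Finset V) : SimpleGraph {w : V // w ∉ T} :=
  SimpleGraph.comap Subtype.val G

/-- The star `K_{1,m}` with center `0`. -/
def starGraph (m : ℕ) : SimpleGraph (Fin (m + 1)) :=
  SimpleGraph.fromRel fun x _ => x = 0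

/-- The disjoint union of three copies of `K₂`. -/
def threeK2 : SimpleGraph (Fin 6) :=
  SimpleGraph.fromRel fun x y =>
    (x = 0 ∧ y = 1) ∨ (x = 2 ∧ y = 3) ∨ (x = 4 ∧ y = 5)

/-- The disjoint union of two paths on three vertices. -/
def twoP3 : SimpleGraph (Fin 6) :=
  SimpleGraph.fromRel fun x y =>
    (x = 0 ∧ y = 1) ∨ (x = 1 ∧ y = 2) ∨ (x = 3 ∧ y = 4) ∨ (x = 4 ∧ y = 5)

/-- The disjoint union of `K₂` and the star `K_{1,k+1}`. -/
def K2PlusStar (k : ℕ) : SimpleGraph (Fin (k + 4)) :=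
  SimpleGraph.fromRel fun x y => (x.val = 0 ∧ y.val = 1) ∨ (x.val = 2 ∧ 3 ≤ y.val)

/-- `E_k`: the star `K_{1,k+1}` with one edge subdivided. Vertex `0` is the center,
`1` is the subdivision vertex, `2` is the leaf behind it, `3, …, k+2` are leaves. -/
def Egraph (k : ℕ) : SimpleGraph (Fin (k + 3)) :=
  SimpleGraph.fromRel fun x y =>
    (x.val = 0 ∧ y.val = 1) ∨ (x.val = 1 ∧ y.val = 2) ∨ (x.val = 0 ∧ 3 ≤ y.val)

/-- Finite graphs represented on the vertex sets `Fin n`. -/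
abbrev GraphOn := Σ n : ℕ, SimpleGraph (Fin n)

/-- `H` is isomorphic to an induced subgraph of `G`. -/
def IsIndSubgraph (H G : GraphOn) : Prop :=
  ∃ s : Set (Fin G.1), Nonempty (H.2 ≃g G.2.induce s)

/-- The sequence `x_n(ε)` from the paper. -/
noncomputable def xseq (ε : ℝ) : ℕ → ℤ
  | 0 => max ⌊2 - Real.logb 2 (1 - ε)⌋ 5
  | n + 1 => 2 ^ (8 * (n + 1) + 10) *
      ⌊(xseq ε n : ℝ) - Real.logb 2 (1 - Int.fract ((2 : ℝ) ^ (xseq ε n) * ε / 2)) + 1⌋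



section RankAux

set_option maxHeartbeats 1000000

open Matrix Module Submodule

variable {F : Type*} [Field F]

/-- Taking an arbitrary submatrix does not increase the rank. -/
theorem rank_submatrix_le_gen {k l m n : Type*} [Fintype k] [Fintype l] [Fintype m] [Fintype n]
    [DecidableEq k] [DecidableEq l]
    (A : Matrix k l F) (f : m → k) (g : n → l) :
    (A.submatrix f g).rank ≤ A.rank := by
  have hE : A.submatrix f g =
      (Matrix.of fun i p => if f i = p then (1 : F) else 0) * A *
      (Matrix.of fun q j => if q = g j then (1 : F) else 0) := by
    ext i j
    rw [Matrix.mul_apply]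
    have h1 : ∀ q, ((Matrix.of fun i p => if f i = p then (1 : F) else 0) * A) i q = A (f i) q := by
      intro q
      rw [Matrix.mul_apply]
      simp [Finset.sum_ite_eq]
    simp only [h1, Matrix.of_apply]
    simp [Finset.sum_ite_eq']
  rw [hE]
  exact le_trans (Matrix.rank_mul_le_left _ _) (Matrix.rank_mul_le_right _ _)

theorem rank_submatrix_equiv {k l m n : Type*} [Fintype k] [Fintype l] [Fintype m] [Fintype n]
    [DecidableEq k] [DecidableEq l] [DecidableEq m] [DecidableEq n]
    (A : Matrix k l F) (e : m ≃ k) (f : n ≃ l) :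
    (A.submatrix e f).rank = A.rank := by
  refine le_antisymm (rank_submatrix_le_gen A e f) ?_
  have h := rank_submatrix_le_gen (A.submatrix e f) e.symm f.symm
  rwa [Matrix.submatrix_submatrix, Equiv.self_comp_symm, Equiv.self_comp_symm,
    Matrix.submatrix_id_id] at h

/-- Zero-extension of a vector supported on a subtype. -/
noncomputable def extMap (q : Type*) (β : Type*) (qq : β → Prop) [DecidablePred qq] :
    ({j // qq j} → F) →ₗ[F] (β → F) where
  toFun u j := if h : qq j then u ⟨j, h⟩ else 0
  map_add' u v := by funext j; by_cases h : qq j <;> simp [h]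
  map_smul' a u := by funext j; by_cases h : qq j <;> simp [h]

theorem key_le {α β : Type*} [Fintype α] [Fintype β]
    (A : Matrix α β F) (c : α) (p : α → Prop) (q : β → Prop)
    [Fintype {i // p i}] [Fintype {j // q j}]
    (h1 : ∀ i, ¬ p i → i ≠ c → ∀ j, A i j = 0)
    (h2 : ∀ i j, p i → ¬ q j → A i j = 0) :
    A.rank ≤ (A.submatrix (Subtype.val : {i // p i} → α)
      (Subtype.val : {j // q j} → β)).rank + 1 := by
  classical
  set B := A.submatrix (Subtype.val : {i // p i} → α) (Subtype.val : {j // q j} → β) with hB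
  set e : ({j // q j} → F) →ₗ[F] (β → F) := extMap F β q with he
  have hrow : ∀ i, A i ∈ (Submodule.span F (Set.range B)).map e ⊔ Submodule.span F {A c} := by
    intro i
    by_cases hp : p i
    · apply Submodule.mem_sup_left
      refine ⟨B ⟨i, hp⟩, Submodule.subset_span ⟨⟨i, hp⟩, rfl⟩, ?_⟩
      funext j
      by_cases hq : q j
      · simp [he, extMap, hq, hB]
      · simp [he, extMap, hq, h2 i j hp hq]
    · by_cases hc : i = c
      · subst hc; exact Submodule.mem_sup_right (Submodule.subset_span rfl)
      · have : A i = 0 := funext fun j => h1 i hp hc j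
        rw [this]; exact Submodule.zero_mem _
  have h3 : A.rank = finrank F (Submodule.span F (Set.range A)) := A.rank_eq_finrank_span_row
  have h4 : Submodule.span F (Set.range A) ≤
      (Submodule.span F (Set.range B)).map e ⊔ Submodule.span F {A c} := by
    rw [Submodule.span_le]; rintro _ ⟨i, rfl⟩; exact hrow i
  calc A.rank = finrank F (Submodule.span F (Set.range A)) := h3
    _ ≤ finrank F ↥((Submodule.span F (Set.range B)).map e ⊔ Submodule.span F {A c}) :=
        Submodule.finrank_mono h4
    _ ≤ finrank F ((Submodule.span F (Set.range B)).map e) + finrank F (Submodule.span F {A c}) :=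
        Submodule.finrank_add_le_finrank_add_finrank _ _
    _ ≤ finrank F (Submodule.span F (Set.range B)) + 1 := by
        gcongr
        · exact Submodule.finrank_map_le _ _
        · exact finrank_span_le_card _ |>.trans (by simp)
    _ = B.rank + 1 := by rw [B.rank_eq_finrank_span_row]; rfl

/-- Zero-padding of a vector by one extra coordinate. -/
noncomputable def padMap (β : Type*) : (β → F) →ₗ[F] (β ⊕ Unit → F) where
  toFun u := Sum.elim u 0
  map_add' u v := by funext j; cases j <;> simp
  map_smul' a u := by funext j; cases j <;> simp

theorem rank_fromBlocks_diag_ge {m n : Type*} [Fintype m] [Fintype n]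
    (M : Matrix m n F) :
    M.rank + 1 ≤ (Matrix.fromBlocks M 0 0 (1 : Matrix Unit Unit F)).rank := by
  classical
  set D := Matrix.fromBlocks M 0 0 (1 : Matrix Unit Unit F) with hD
  set e : n ⊕ Unit → F := Sum.elim 0 1 with hee
  have he_ne : e ≠ 0 := by
    intro h
    have := congrFun h (Sum.inr ())
    simp [hee] at this
  set ι : (n → F) →ₗ[F] (n ⊕ Unit → F) := padMap n with hι
  have hinj : Function.Injective ι := by
    intro u v h
    funext j
    exact congrFun h (Sum.inl j)
  set P : Submodule F (n ⊕ Unit → F) := (Submodule.span F (Set.range M)).map ι with hP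
  have heP : e ∉ P := by
    rintro ⟨u, -, hu⟩
    have := congrFun hu (Sum.inr ())
    simp [hι, padMap, hee] at this
  have hsub : P ⊔ Submodule.span F {e} ≤ Submodule.span F (Set.range D) := by
    apply sup_le
    · rw [hP, ← Submodule.span_image, Submodule.span_le]
      rintro _ ⟨_, ⟨i, rfl⟩, rfl⟩
      apply Submodule.subset_span
      refine ⟨Sum.inl i, ?_⟩
      funext j
      cases j <;> simp [hD, hι, padMap]
    · rw [Submodule.span_le, Set.singleton_subset_iff]
      apply Submodule.subset_span
      refine ⟨Sum.inr (), ?_⟩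
      funext j
      cases j <;> simp [hD, hee, Matrix.one_apply]
  have hdisj : P ⊓ Submodule.span F {e} = ⊥ := by
    rw [← disjoint_iff]
    rw [Submodule.disjoint_span_singleton]
    exact fun h => absurd h heP
  have h1 : finrank F ↥(P ⊔ Submodule.span F {e}) = finrank F P + 1 := by
    have := Submodule.finrank_sup_add_finrank_inf_eq P (Submodule.span F {e})
    rw [hdisj, finrank_bot, add_zero, finrank_span_singleton he_ne] at this
    exact this
  have h2 : finrank F P = M.rank := by
    rw [hP, M.rank_eq_finrank_span_row]
    exact (Submodule.equivMapOfInjective ι hinj _).finrank_eq.symm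
  calc M.rank + 1 = finrank F ↥(P ⊔ Submodule.span F {e}) := by rw [h1, h2]
    _ ≤ finrank F (Submodule.span F (Set.range D)) := Submodule.finrank_mono hsub
    _ = D.rank := D.rank_eq_finrank_span_row.symm

theorem key_ge {α β : Type*} [Fintype α] [Fintype β]
    (A : Matrix α β F) (c : α) (l : β) (p : α → Prop) (q : β → Prop)
    [Fintype {i // p i}] [Fintype {j // q j}]
    (h3 : ∀ i, p i → A i l = 0) (h4 : A c l = 1) :
    (A.submatrix (Subtype.val : {i // p i} → α)
      (Subtype.val : {j // q j} → β)).rank + 1 ≤ A.rank := by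
  classical
  set B := A.submatrix (Subtype.val : {i // p i} → α) (Subtype.val : {j // q j} → β) with hB
  set f : {i // p i} ⊕ Unit → α := Sum.elim Subtype.val (fun _ => c) with hf
  set g : {j // q j} ⊕ Unit → β := Sum.elim Subtype.val (fun _ => l) with hg
  set C : Matrix Unit {j // q j} F := Matrix.of fun _ j => A c j.1 with hC
  have hN : A.submatrix f g = Matrix.fromBlocks B 0 C 1 := by
    ext i j
    rcases i with i | ⟨⟩ <;> rcases j with j | ⟨⟩
    · simp [hf, hg, hB]
    · simpa [hf, hg] using h3 _ i.2
    · simp [hf, hg, hC]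
    · simpa [hf, hg, Matrix.one_apply] using h4
  have hmul : A.submatrix f g *
      (Matrix.fromBlocks 1 0 (-C) 1 : Matrix ({j // q j} ⊕ Unit) ({j // q j} ⊕ Unit) F)
        = Matrix.fromBlocks B 0 0 1 := by
    rw [hN, Matrix.fromBlocks_multiply]
    congr 1 <;> simp
  calc B.rank + 1 ≤ (Matrix.fromBlocks B 0 0 (1 : Matrix Unit Unit F)).rank :=
        rank_fromBlocks_diag_ge B
    _ = (A.submatrix f g *
        (Matrix.fromBlocks 1 0 (-C) 1 : Matrix ({j // q j} ⊕ Unit) ({j // q j} ⊕ Unit) F)).rank :=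
        by rw [hmul]
    _ ≤ (A.submatrix f g).rank := Matrix.rank_mul_le_left _ _
    _ ≤ A.rank := rank_submatrix_le_gen A f g

end RankAux

section GraphAux

set_option maxHeartbeats 1000000

open Matrix

variable {V' : Type*} [Fintype V'] [DecidableEq V']

/-- The cut matrix of a graph. -/
noncomputable def cutMat (G : SimpleGraph V') (X : Finset V') :
    Matrix ↥X ↥(Xᶜ) (ZMod 2) :=
  Matrix.of fun i j => if G.Adj i.1 j.1 then (1 : ZMod 2) else 0

lemma cutRank_eq (G : SimpleGraph V') (X : Finset V') :
    cutRank G X = (cutMat G X).rank := rfl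

lemma cutRank_empty' (G : SimpleGraph V') : cutRank G ∅ = 0 := by
  have h := Matrix.rank_le_card_height (cutMat G (∅ : Finset V'))
  rw [cutRank_eq]
  simpa using h

lemma cutRank_univ' (G : SimpleGraph V') : cutRank G Finset.univ = 0 := by
  have h := Matrix.rank_le_card_width (cutMat G (Finset.univ : Finset V'))
  rw [cutRank_eq]
  simp only [Finset.compl_univ] at h ⊢
  simpa using h

/-- Restriction of a vertex subset to the complement of `T`. -/
noncomputable def resT (T : Finset V') (X : Finset V') : Finset {w : V' // w ∉ T} :=
  X.subtype (· ∉ T)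

lemma rank_corner (G : SimpleGraph V') (T : Finset V') (X : Finset V') :
    ((cutMat G X).submatrix
        (Subtype.val : {i : ↥X // (i : V') ∉ T} → ↥X)
        (Subtype.val : {j : ↥(Xᶜ) // (j : V') ∉ T} → ↥(Xᶜ))).rank
      = cutRank (deleteVerts G T) (resT T X) := by
  classical
  let e₁ : ↥(resT T X) ≃ {i : ↥X // (i : V') ∉ T} :=
    { toFun := fun y => ⟨⟨y.1.1, by
        have := y.2; simp only [resT, Finset.mem_subtype] at this; exact this⟩, y.1.2⟩
      invFun := fun i => ⟨⟨i.1.1, i.2⟩, by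
        simp only [resT, Finset.mem_subtype]; exact i.1.2⟩
      left_inv := fun y => by ext; rfl
      right_inv := fun i => by ext; rfl }
  let e₂ : ↥((resT T X)ᶜ) ≃ {j : ↥(Xᶜ) // (j : V') ∉ T} :=
    { toFun := fun z => ⟨⟨z.1.1, by
        have := z.2
        simp only [Finset.mem_compl, resT, Finset.mem_subtype] at this
        rw [Finset.mem_compl]; exact this⟩, z.1.2⟩
      invFun := fun j => ⟨⟨j.1.1, j.2⟩, by
        simp only [Finset.mem_compl, resT, Finset.mem_subtype]
        have := j.1.2; rw [Finset.mem_compl] at this; exact this⟩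
      left_inv := fun z => by ext; rfl
      right_inv := fun j => by ext; rfl }
  have hmat : cutMat (deleteVerts G T) (resT T X)
      = ((cutMat G X).submatrix
        (Subtype.val : {i : ↥X // (i : V') ∉ T} → ↥X)
        (Subtype.val : {j : ↥(Xᶜ) // (j : V') ∉ T} → ↥(Xᶜ))).submatrix e₁ e₂ := by
    ext i j
    rfl
  rw [cutRank_eq, hmat, rank_submatrix_equiv]

lemma lemX2 (G : SimpleGraph V') (T : Finset V') (X : Finset V') :
    cutRank (deleteVerts G T) (resT T X) ≤ cutRank G X := by
  rw [← rank_corner G T X, cutRank_eq]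
  exact rank_submatrix_le_gen _ _ _

lemma lemX1 (G : SimpleGraph V') (T : Finset V') {c : V'} (hc : c ∈ T)
    (hstar : ∀ x ∈ T, x ≠ c → G.Adj c x ∧ ∀ y, G.Adj x y → y = c) (X : Finset V') :
    cutRank G X ≤ cutRank (deleteVerts G T) (resT T X) + 1 := by
  classical
  rw [cutRank_eq, ← rank_corner G T X]
  by_cases hcX : c ∈ X
  · apply key_le (cutMat G X) ⟨c, hcX⟩
      (fun i : ↥X => (i : V') ∉ T) (fun j : ↥(Xᶜ) => (j : V') ∉ T)
    · rintro ⟨i, hiX⟩ hiT hne ⟨j, hjX⟩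
      simp only [not_not] at hiT
      have hineq : i ≠ c := fun h => hne (Subtype.ext h)
      simp only [cutMat, Matrix.of_apply, ite_eq_right_iff]
      intro hadj
      exfalso
      have hjc : j = c := (hstar i hiT hineq).2 j hadj
      exact absurd hcX (hjc ▸ Finset.mem_compl.mp hjX)
    · rintro ⟨i, hiX⟩ ⟨j, hjX⟩ hiT hjT
      simp only [not_not] at hjT
      have hjne : j ≠ c := fun h => (Finset.mem_compl.mp hjX) (h ▸ hcX)
      simp only [cutMat, Matrix.of_apply, ite_eq_right_iff]
      intro hadj
      exfalso
      have : i = c := (hstar j hjT hjne).2 i hadj.symm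
      exact hiT (this ▸ hc)
  · have hcXc : c ∈ Xᶜ := Finset.mem_compl.mpr hcX
    have hkey := key_le (cutMat G X)ᵀ ⟨c, hcXc⟩
      (fun i : ↥(Xᶜ) => (i : V') ∉ T) (fun j : ↥X => (j : V') ∉ T)
      (by
        rintro ⟨i, hiX⟩ hiT hne ⟨j, hjX⟩
        simp only [not_not] at hiT
        have hineq : i ≠ c := fun h => hne (Subtype.ext h)
        simp only [cutMat, Matrix.transpose_apply, Matrix.of_apply, ite_eq_right_iff]
        intro hadj
        exfalso
        have : j = c := (hstar i hiT hineq).2 j hadj.symm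
        exact absurd hjX (this ▸ hcX)
      )
      (by
        rintro ⟨i, hiX⟩ ⟨j, hjX⟩ hiT hjT
        simp only [not_not] at hjT
        have hjne : j ≠ c := fun h => hcX (h ▸ hjX)
        simp only [cutMat, Matrix.transpose_apply, Matrix.of_apply, ite_eq_right_iff]
        intro hadj
        exfalso
        have : i = c := (hstar j hjT hjne).2 i hadj
        exact hiT (this ▸ hc)
      )
    rwa [← Matrix.transpose_submatrix, Matrix.rank_transpose, Matrix.rank_transpose] at hkey

lemma lemX3 (G : SimpleGraph V') (T : Finset V') {c : V'} (hc : c ∈ T)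
    (hstar : ∀ x ∈ T, x ≠ c → G.Adj c x ∧ ∀ y, G.Adj x y → y = c) (X : Finset V')
    (h₁ : ∃ a ∈ T, a ∈ X) (h₂ : ∃ b ∈ T, b ∉ X) :
    cutRank (deleteVerts G T) (resT T X) + 1 ≤ cutRank G X := by
  classical
  rw [cutRank_eq G X, ← rank_corner G T X]
  by_cases hcX : c ∈ X
  · obtain ⟨b, hbT, hbX⟩ := h₂
    have hbne : b ≠ c := fun h => hbX (h ▸ hcX)
    apply key_ge (cutMat G X) ⟨c, hcX⟩ ⟨b, Finset.mem_compl.mpr hbX⟩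
      (fun i : ↥X => (i : V') ∉ T) (fun j : ↥(Xᶜ) => (j : V') ∉ T)
    · rintro ⟨i, hiX⟩ hiT
      simp only [cutMat, Matrix.of_apply, ite_eq_right_iff]
      intro hadj
      exfalso
      have : i = c := (hstar b hbT hbne).2 i hadj.symm
      exact hiT (this ▸ hc)
    · simp only [cutMat, Matrix.of_apply]
      rw [if_pos]
      exact (hstar b hbT hbne).1
  · obtain ⟨a, haT, haX⟩ := h₁
    have hane : a ≠ c := fun h => hcX (h ▸ haX)
    have hcXc : c ∈ Xᶜ := Finset.mem_compl.mpr hcX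
    have hkey := key_ge (cutMat G X)ᵀ ⟨c, hcXc⟩ ⟨a, haX⟩
      (fun i : ↥(Xᶜ) => (i : V') ∉ T) (fun j : ↥X => (j : V') ∉ T)
      (by
        rintro ⟨i, hiX⟩ hiT
        simp only [cutMat, Matrix.transpose_apply, Matrix.of_apply, ite_eq_right_iff]
        intro hadj
        exfalso
        have : i = c := (hstar a haT hane).2 i hadj
        exact hiT (this ▸ hc)
      )
      (by
        simp only [cutMat, Matrix.transpose_apply, Matrix.of_apply]
        rw [if_pos]
        exact ((hstar a haT hane).1).symm
      )
    rwa [← Matrix.transpose_submatrix, Matrix.rank_transpose, Matrix.rank_transpose] at hkey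

/-- Splitting a subset of the vertices into its `T`-part and its non-`T`-part. -/
noncomputable def splitEquiv (T : Finset V') :
    Finset V' ≃ Finset {w : V' // w ∈ T} × Finset {w : V' // w ∉ T} where
  toFun X := (X.subtype (· ∈ T), X.subtype (· ∉ T))
  invFun p := p.1.map (Function.Embedding.subtype _) ∪ p.2.map (Function.Embedding.subtype _)
  left_inv X := by
    simp only [Finset.subtype_map]
    exact Finset.filter_union_filter_not_eq _ X
  right_inv p := by
    obtain ⟨A, B⟩ := p
    have h1 : ∀ (a : V') (ha : a ∈ T),
        a ∈ A.map (Function.Embedding.subtype _) ∪ B.map (Function.Embedding.subtype _)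
          ↔ ⟨a, ha⟩ ∈ A := by
      intro a ha
      simp only [Finset.mem_union, Finset.mem_map, Function.Embedding.coe_subtype]
      constructor
      · rintro (⟨x, hx, rfl⟩ | ⟨x, hx, rfl⟩)
        · simpa using hx
        · exact absurd ha x.2
      · intro h; exact Or.inl ⟨⟨a, ha⟩, h, rfl⟩
    have h2 : ∀ (a : V') (ha : a ∉ T),
        a ∈ A.map (Function.Embedding.subtype _) ∪ B.map (Function.Embedding.subtype _)
          ↔ ⟨a, ha⟩ ∈ B := by
      intro a ha
      simp only [Finset.mem_union, Finset.mem_map, Function.Embedding.coe_subtype]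
      constructor
      · rintro (⟨x, hx, rfl⟩ | ⟨x, hx, rfl⟩)
        · exact absurd x.2 ha
        · simpa using hx
      · intro h; exact Or.inr ⟨⟨a, ha⟩, h, rfl⟩
    refine Prod.ext ?_ ?_
    · ext ⟨a, ha⟩
      rw [Finset.mem_subtype]
      exact h1 a ha
    · ext ⟨a, ha⟩
      rw [Finset.mem_subtype]
      exact h2 a ha

lemma sum_resT (T : Finset V') (f : Finset {w : V' // w ∉ T} → ℝ) :
    ∑ X : Finset V', f (resT T X)
      = 2 ^ T.card * ∑ Y : Finset {w : V' // w ∉ T}, f Y := by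
  have h := Equiv.sum_comp (splitEquiv T)
    (fun p : Finset {w : V' // w ∈ T} × Finset {w : V' // w ∉ T} => f p.2)
  rw [show (fun X => (fun p : Finset {w : V' // w ∈ T} × Finset {w : V' // w ∉ T} => f p.2)
      ((splitEquiv T) X)) = fun X => f (resT T X) from rfl] at h
  rw [h, Fintype.sum_prod_type]
  simp only [Finset.sum_const, Finset.card_univ, smul_eq_mul]
  rw [Fintype.card_finset]
  have hcard : Fintype.card {w : V' // w ∈ T} = T.card := Fintype.card_coe T
  rw [hcard]
  push_cast
  ring

lemma count_deg (T : Finset V') (hT : T.Nonempty) :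
    (Finset.univ.filter fun X : Finset V' =>
      (∀ a ∈ T, a ∉ X) ∨ (∀ b ∈ T, b ∈ X)).card = 2 ^ Tᶜ.card + 2 ^ Tᶜ.card := by
  rw [Finset.filter_or]
  rw [Finset.card_union_of_disjoint]
  · congr 1
    · have : (Finset.univ.filter fun X : Finset V' => ∀ a ∈ T, a ∉ X) = Tᶜ.powerset := by
        ext X
        simp only [Finset.mem_filter, Finset.mem_univ, true_and, Finset.mem_powerset]
        constructor
        · intro h x hx
          exact Finset.mem_compl.mpr fun hxT => h x hxT hx
        · intro h a haT haX
          exact Finset.mem_compl.mp (h haX) haT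
      rw [this, Finset.card_powerset]
    · rw [← Finset.card_powerset (s := Tᶜ)]
      apply Finset.card_nbij' (fun X => Xᶜ) (fun Y => Yᶜ)
      · intro X hX
        simp only [Finset.mem_coe, Finset.mem_filter, Finset.mem_univ, true_and] at hX
        simp only [Finset.mem_coe, Finset.mem_powerset]
        intro x hx
        exact Finset.mem_compl.mpr fun hxT => Finset.mem_compl.mp hx (hX x hxT)
      · intro Y hY
        simp only [Finset.mem_coe, Finset.mem_powerset] at hY
        simp only [Finset.mem_coe, Finset.mem_filter, Finset.mem_univ, true_and]
        intro b hbT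
        rw [Finset.mem_compl]
        intro hbY
        exact Finset.mem_compl.mp (hY hbY) hbT
      · intro X _; exact compl_compl X
      · intro Y _; exact compl_compl Y
  · rw [Finset.disjoint_left]
    intro X hX1 hX2
    simp only [Finset.mem_filter, Finset.mem_univ, true_and] at hX1 hX2
    obtain ⟨a, ha⟩ := hT
    exact hX1 a ha (hX2 a ha)

end GraphAux

set_option maxHeartbeats 1000000 in

/-- If `T` is the vertex set of an attached star in `G` and
`H = G − T`, then `Eρ(G) − 1 < Eρ(H) ≤ Eρ(G) − 1 + 2^(1−|T|)`. -/
theorem stmt13 {V : Type} [Fintype V] [DecidableEq V] [Nonempty V]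
    (G : SimpleGraph V) (T : Finset V) (hT : IsAttachedStar G ↑T) :
    avgCutRank G - 1 < avgCutRank (deleteVerts G T) ∧
    avgCutRank (deleteVerts G T) ≤ avgCutRank G - 1 + (2 : ℝ) ^ (1 - (T.card : ℤ)) := by
  classical
  obtain ⟨c, hcT, -, hstar'⟩ := hT
  rw [Finset.mem_coe] at hcT
  have hstar : ∀ x ∈ T, x ≠ c → G.Adj c x ∧ ∀ y, G.Adj x y → y = c := by
    intro x hx hne
    exact hstar' x (Finset.mem_coe.mpr hx) hne
  set H := deleteVerts G T with hH
  set SG : ℝ := ∑ X : Finset V, (cutRank G X : ℝ) with hSG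
  set SH : ℝ := ∑ Y : Finset {w : V // w ∉ T}, (cutRank H Y : ℝ) with hSH
  set SP : ℝ := ∑ X : Finset V, (cutRank H (resT T X) : ℝ) with hSP
  have hSP2 : SP = 2 ^ T.card * SH := sum_resT T (fun Y => (cutRank H Y : ℝ))
  set n := Fintype.card V with hn
  set k := Tᶜ.card with hk
  have hnk : T.card + k = n := Finset.card_add_card_compl T
  have hne : (∅ : Finset V) ≠ Finset.univ := by
    intro h
    obtain ⟨v⟩ := ‹Nonempty V›
    have := h ▸ Finset.mem_univ v
    exact absurd this (Finset.notMem_empty v)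
  have A1 : SG + 2 ≤ SP + 2 ^ n := by
    have step : ∀ X : Finset V,
        (cutRank G X : ℝ) + ((if X = (∅ : Finset V) then (1:ℝ) else 0)
          + (if X = Finset.univ then (1:ℝ) else 0))
          ≤ (cutRank H (resT T X) : ℝ) + 1 := by
      intro X
      by_cases h0 : X = (∅ : Finset V)
      · subst h0
        rw [cutRank_empty']
        rw [if_pos rfl, if_neg hne]
        have := Nat.cast_nonneg (α := ℝ) (cutRank H (resT T (∅ : Finset V)))
        push_cast
        linarith
      · by_cases h1 : X = Finset.univ
        · subst h1
          rw [cutRank_univ']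
          rw [if_neg (Ne.symm hne), if_pos rfl]
          have := Nat.cast_nonneg (α := ℝ) (cutRank H (resT T (Finset.univ : Finset V)))
          push_cast
          linarith
        · rw [if_neg h0, if_neg h1]
          have := lemX1 G T hcT hstar X
          push_cast
          rw [add_zero, add_zero]
          exact_mod_cast this
    have hsum := Finset.sum_le_sum (s := Finset.univ) (fun X _ => step X)
    rw [Finset.sum_add_distrib, Finset.sum_add_distrib, Finset.sum_add_distrib] at hsum
    simp only [Finset.sum_ite_eq' Finset.univ, Finset.mem_univ, if_true] at hsum
    rw [Finset.sum_const, Finset.card_univ, Fintype.card_finset] at hsum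
    simp only [nsmul_eq_mul, mul_one] at hsum
    calc SG + 2 = SG + (1 + 1) := by norm_num
      _ ≤ SP + 2 ^ n := by
          rw [hSG, hSP]
          push_cast at hsum ⊢
          linarith [hsum]
  have A2 : SP + (2 ^ n - 2 * 2 ^ k) ≤ SG := by
    set Q : Finset V → Prop := fun X => (∀ a ∈ T, a ∉ X) ∨ (∀ b ∈ T, b ∈ X) with hQ
    have step : ∀ X : Finset V,
        (cutRank H (resT T X) : ℝ) + (1 - if Q X then (1:ℝ) else 0) ≤ (cutRank G X : ℝ) := by
      intro X
      by_cases hq : Q X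
      · rw [if_pos hq]
        simpa using (by exact_mod_cast lemX2 G T X : (cutRank H (resT T X) : ℝ) ≤ cutRank G X)
      · rw [if_neg hq]
        simp only [hQ] at hq
        push_neg at hq
        obtain ⟨⟨a, haT, haX⟩, ⟨b, hbT, hbX⟩⟩ := hq
        have := lemX3 G T hcT hstar X ⟨a, haT, by simpa using haX⟩ ⟨b, hbT, hbX⟩
        have := (by exact_mod_cast this : (cutRank H (resT T X) : ℝ) + 1 ≤ cutRank G X)
        linarith
    have hsum := Finset.sum_le_sum (s := Finset.univ) (fun X _ => step X)
    rw [Finset.sum_add_distrib, Finset.sum_sub_distrib] at hsum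
    rw [Finset.sum_const, Finset.card_univ, Fintype.card_finset] at hsum
    have hcnt : (∑ X : Finset V, if Q X then (1:ℝ) else 0) = 2 ^ k + 2 ^ k := by
      rw [Finset.sum_boole]
      simp only [hQ]
      exact_mod_cast count_deg T ⟨c, hcT⟩
    rw [hcnt] at hsum
    simp only [nsmul_eq_mul, mul_one] at hsum
    rw [hSP]
    push_cast at hsum ⊢
    linarith [hsum]
  have hb : (0:ℝ) < 2 ^ k := by positivity
  have ha : (0:ℝ) < 2 ^ T.card := by positivity
  have hab : (0:ℝ) < 2 ^ n := by positivity
  have hprod : (2:ℝ) ^ n = 2 ^ T.card * 2 ^ k := by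
    rw [← pow_add, hnk]
  have hcardH : Fintype.card {w : V // w ∉ T} = k := by
    rw [hk, Fintype.card_subtype]
    congr 1
    ext x
    simp
  have havgG : avgCutRank G = SG / 2 ^ n := rfl
  have havgH : avgCutRank H = SH / 2 ^ k := by
    rw [avgCutRank, hcardH]
  have hzpow : (2:ℝ) ^ (1 - (T.card : ℤ)) = 2 / 2 ^ T.card := by
    rw [zpow_sub₀ (by norm_num : (2:ℝ) ≠ 0), zpow_one, zpow_natCast]
  rw [hH] at havgH
  constructor
  · rw [havgG, havgH]
    rw [sub_lt_iff_lt_add, div_lt_iff₀ hab]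
    have h1 : (SH / 2 ^ k + 1) * 2 ^ n = 2 ^ T.card * SH + 2 ^ n := by
      rw [hprod]
      field_simp
    rw [h1]
    have := hSP2 ▸ A1
    linarith
  · rw [havgG, havgH, hzpow]
    have h2 : (2 ^ T.card * SH + 2 ^ n - 2 * 2 ^ k) / 2 ^ n - 1 + 2 / 2 ^ T.card
        = SH / 2 ^ k := by
      rw [hprod]
      field_simp
      ring
    rw [← h2]
    have hA2 : 2 ^ T.card * SH + (2 ^ n - 2 * 2 ^ k) ≤ SG := by
      rw [← hSP2]; exact A2
    gcongr
    linarith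

end AvgCutRank
end

section
/- For every finite simple graph G, the maximum cut-rank satisfies maxρ(G) ≤ 4·Eρ(G). -/
open scoped Classical
open scoped symmDiff

namespace AvgCutRank

variable {V : Type*} {W : Type*}

section Helpers
open Matrix

variable {F : Type*} [Field F] {m n o o' : Type*} [Fintype m] [Fintype n] [Fintype o] [Fintype o']

lemma rank_sub_col_le (A : Matrix m n F) (g : o → n) : (A.submatrix id g).rank ≤ A.rank := by
  rw [Matrix.rank_eq_finrank_span_cols, Matrix.rank_eq_finrank_span_cols]
  apply Submodule.finrank_mono
  refine Submodule.span_le.2 ?_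
  rintro _ ⟨j, rfl⟩
  exact Submodule.subset_span ⟨g j, rfl⟩

lemma rank_sub_row_le (A : Matrix m n F) (f : o → m) : (A.submatrix f id).rank ≤ A.rank := by
  rw [← Matrix.rank_transpose (A.submatrix f id), ← Matrix.rank_transpose A,
    Matrix.transpose_submatrix]
  exact rank_sub_col_le Aᵀ f

lemma rank_submatrix_le' (A : Matrix m n F) (f : o' → m) (g : o → n) :
    (A.submatrix f g).rank ≤ A.rank := by
  have h : A.submatrix f g = (A.submatrix id g).submatrix f id := rfl
  rw [h]
  exact le_trans (rank_sub_row_le _ f) (rank_sub_col_le A g)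

lemma rank_le_sub_col_add (A : Matrix m n F) (g1 : o → n) (g2 : o' → n)
    (h : ∀ j, (∃ a, g1 a = j) ∨ (∃ b, g2 b = j)) :
    A.rank ≤ (A.submatrix id g1).rank + (A.submatrix id g2).rank := by
  rw [Matrix.rank_eq_finrank_span_cols, Matrix.rank_eq_finrank_span_cols,
    Matrix.rank_eq_finrank_span_cols]
  refine le_trans (Submodule.finrank_mono ?_)
    (Submodule.finrank_add_le_finrank_add_finrank _ _)
  rw [← Submodule.span_union]
  refine Submodule.span_le.2 ?_
  rintro _ ⟨j, rfl⟩
  rcases h j with ⟨a, rfl⟩ | ⟨b, rfl⟩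
  · exact Submodule.subset_span (Or.inl ⟨a, rfl⟩)
  · exact Submodule.subset_span (Or.inr ⟨b, rfl⟩)

lemma rank_le_sub_row_add (A : Matrix m n F) (f1 : o → m) (f2 : o' → m)
    (h : ∀ i, (∃ a, f1 a = i) ∨ (∃ b, f2 b = i)) :
    A.rank ≤ (A.submatrix f1 id).rank + (A.submatrix f2 id).rank := by
  rw [← Matrix.rank_transpose (A.submatrix f1 id), ← Matrix.rank_transpose (A.submatrix f2 id),
    ← Matrix.rank_transpose A, Matrix.transpose_submatrix, Matrix.transpose_submatrix]
  exact rank_le_sub_col_add Aᵀ f1 f2 h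

end Helpers

/-- The GF(2) adjacency matrix of a graph. -/
noncomputable def adjMat {V : Type} (G : SimpleGraph V) : Matrix V V (ZMod 2) :=
  Matrix.of fun i j => if G.Adj i j then 1 else 0

open Matrix symmDiff in
lemma cutRank_le_core {V : Type} [Fintype V] [DecidableEq V] (G : SimpleGraph V)
    (X S : Finset V) :
    cutRank G X ≤ 2 * cutRank G S + 2 * cutRank G (S ∆ X) := by
  have hsymm : (adjMat G)ᵀ = (adjMat G) := by
    ext i j
    simp only [Matrix.transpose_apply, adjMat, Matrix.of_apply]
    rw [G.adj_comm]
  have hcut : ∀ Y : Finset V, cutRank G Y =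
      ((adjMat G).submatrix (fun i : Y => (i : V)) (fun j : (Yᶜ : Finset V) => (j : V))).rank :=
    fun Y => rfl
  have hrev : ∀ Y : Finset V,
      ((adjMat G).submatrix (fun i : (Yᶜ : Finset V) => (i : V)) (fun j : Y => (j : V))).rank
        = cutRank G Y := by
    intro Y
    rw [← Matrix.rank_transpose, Matrix.transpose_submatrix, hsymm]
    exact (hcut Y).symm
  have h11eq : cutRank G (S ∆ X) = ((adjMat G).submatrix (fun i : ((S ∆ X)ᶜ : Finset V) => (i : V))
        (fun j : (S ∆ X : Finset V) => (j : V))).rank := (hrev (S ∆ X)).symm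
  have h21eq : cutRank G S = ((adjMat G).submatrix (fun i : (Sᶜ : Finset V) => (i : V)) (fun j : S => (j : V))).rank := (hrev S).symm
  have h12eq : cutRank G S = ((adjMat G).submatrix (fun i : S => (i : V)) (fun j : (Sᶜ : Finset V) => (j : V))).rank := hcut S
  have h22eq : cutRank G (S ∆ X) = ((adjMat G).submatrix (fun i : (S ∆ X : Finset V) => (i : V))
        (fun j : ((S ∆ X)ᶜ : Finset V) => (j : V))).rank := hcut (S ∆ X)
  have hg : ∀ j, (∃ a, (fun j : {j : (Xᶜ : Finset V) // (j : V) ∈ S} => j.1) a = j) ∨ (∃ b, (fun j : {j : (Xᶜ : Finset V) // (j : V) ∉ S} => j.1) b = j) := by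
    intro j
    by_cases hj : (j : V) ∈ S
    · exact Or.inl ⟨⟨j, hj⟩, rfl⟩
    · exact Or.inr ⟨⟨j, hj⟩, rfl⟩
  have hf : ∀ i, (∃ a, (fun i : {i : X // (i : V) ∈ S} => i.1) a = i) ∨ (∃ b, (fun i : {i : X // (i : V) ∉ S} => i.1) b = i) := by
    intro i
    by_cases hi : (i : V) ∈ S
    · exact Or.inl ⟨⟨i, hi⟩, rfl⟩
    · exact Or.inr ⟨⟨i, hi⟩, rfl⟩
  have hcol := rank_le_sub_col_add ((adjMat G).submatrix (fun i : X => (i : V)) (fun j : (Xᶜ : Finset V) => (j : V))) (fun j : {j : (Xᶜ : Finset V) // (j : V) ∈ S} => j.1) (fun j : {j : (Xᶜ : Finset V) // (j : V) ∉ S} => j.1) hg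
  have hrow1 := rank_le_sub_row_add (((adjMat G).submatrix (fun i : X => (i : V)) (fun j : (Xᶜ : Finset V) => (j : V))).submatrix id (fun j : {j : (Xᶜ : Finset V) // (j : V) ∈ S} => j.1)) (fun i : {i : X // (i : V) ∈ S} => i.1) (fun i : {i : X // (i : V) ∉ S} => i.1) hf
  have hrow2 := rank_le_sub_row_add (((adjMat G).submatrix (fun i : X => (i : V)) (fun j : (Xᶜ : Finset V) => (j : V))).submatrix id (fun j : {j : (Xᶜ : Finset V) // (j : V) ∉ S} => j.1)) (fun i : {i : X // (i : V) ∈ S} => i.1) (fun i : {i : X // (i : V) ∉ S} => i.1) hf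
  have heq11 : ((((adjMat G).submatrix (fun i : X => (i : V)) (fun j : (Xᶜ : Finset V) => (j : V))).submatrix id (fun j : {j : (Xᶜ : Finset V) // (j : V) ∈ S} => j.1)).submatrix (fun i : {i : X // (i : V) ∈ S} => i.1) id) = ((adjMat G).submatrix (fun i : ((S ∆ X)ᶜ : Finset V) => (i : V))
        (fun j : (S ∆ X : Finset V) => (j : V))).submatrix (fun i : {i : X // (i : V) ∈ S} => (⟨i.1.1, by
        have h1 : (i.1.1 : V) ∈ X := i.1.2
        have h2 : (i.1.1 : V) ∈ S := i.2
        exact Finset.mem_compl.2 (by simp [Finset.mem_symmDiff, h1, h2])⟩ : ((S ∆ X)ᶜ : Finset V))) (fun j : {j : (Xᶜ : Finset V) // (j : V) ∈ S} => (⟨j.1.1, by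
        have h1 : (j.1.1 : V) ∉ X := Finset.mem_compl.1 j.1.2
        have h2 : (j.1.1 : V) ∈ S := j.2
        exact Finset.mem_symmDiff.2 (Or.inl ⟨h2, h1⟩)⟩ : (S ∆ X : Finset V))) := by
    ext i j
    rfl
  have hb11 : ((((adjMat G).submatrix (fun i : X => (i : V)) (fun j : (Xᶜ : Finset V) => (j : V))).submatrix id (fun j : {j : (Xᶜ : Finset V) // (j : V) ∈ S} => j.1)).submatrix (fun i : {i : X // (i : V) ∈ S} => i.1) id).rank ≤ cutRank G (S ∆ X) := by
    rw [heq11, h11eq]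
    exact rank_submatrix_le' ((adjMat G).submatrix (fun i : ((S ∆ X)ᶜ : Finset V) => (i : V))
        (fun j : (S ∆ X : Finset V) => (j : V))) (fun i : {i : X // (i : V) ∈ S} => (⟨i.1.1, by
        have h1 : (i.1.1 : V) ∈ X := i.1.2
        have h2 : (i.1.1 : V) ∈ S := i.2
        exact Finset.mem_compl.2 (by simp [Finset.mem_symmDiff, h1, h2])⟩ : ((S ∆ X)ᶜ : Finset V))) (fun j : {j : (Xᶜ : Finset V) // (j : V) ∈ S} => (⟨j.1.1, by
        have h1 : (j.1.1 : V) ∉ X := Finset.mem_compl.1 j.1.2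
        have h2 : (j.1.1 : V) ∈ S := j.2
        exact Finset.mem_symmDiff.2 (Or.inl ⟨h2, h1⟩)⟩ : (S ∆ X : Finset V)))

  have heq21 : ((((adjMat G).submatrix (fun i : X => (i : V)) (fun j : (Xᶜ : Finset V) => (j : V))).submatrix id (fun j : {j : (Xᶜ : Finset V) // (j : V) ∈ S} => j.1)).submatrix (fun i : {i : X // (i : V) ∉ S} => i.1) id) = ((adjMat G).submatrix (fun i : (Sᶜ : Finset V) => (i : V)) (fun j : S => (j : V))).submatrix (fun i : {i : X // (i : V) ∉ S} => (⟨i.1.1, Finset.mem_compl.2 i.2⟩ : (Sᶜ : Finset V))) (fun j : {j : (Xᶜ : Finset V) // (j : V) ∈ S} => (⟨j.1.1, j.2⟩ : S)) := by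
    ext i j
    rfl
  have hb21 : ((((adjMat G).submatrix (fun i : X => (i : V)) (fun j : (Xᶜ : Finset V) => (j : V))).submatrix id (fun j : {j : (Xᶜ : Finset V) // (j : V) ∈ S} => j.1)).submatrix (fun i : {i : X // (i : V) ∉ S} => i.1) id).rank ≤ cutRank G S := by
    rw [heq21, h21eq]
    exact rank_submatrix_le' ((adjMat G).submatrix (fun i : (Sᶜ : Finset V) => (i : V)) (fun j : S => (j : V))) (fun i : {i : X // (i : V) ∉ S} => (⟨i.1.1, Finset.mem_compl.2 i.2⟩ : (Sᶜ : Finset V))) (fun j : {j : (Xᶜ : Finset V) // (j : V) ∈ S} => (⟨j.1.1, j.2⟩ : S))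

  have heq12 : ((((adjMat G).submatrix (fun i : X => (i : V)) (fun j : (Xᶜ : Finset V) => (j : V))).submatrix id (fun j : {j : (Xᶜ : Finset V) // (j : V) ∉ S} => j.1)).submatrix (fun i : {i : X // (i : V) ∈ S} => i.1) id) = ((adjMat G).submatrix (fun i : S => (i : V)) (fun j : (Sᶜ : Finset V) => (j : V))).submatrix (fun i : {i : X // (i : V) ∈ S} => (⟨i.1.1, i.2⟩ : S)) (fun j : {j : (Xᶜ : Finset V) // (j : V) ∉ S} => (⟨j.1.1, Finset.mem_compl.2 j.2⟩ : (Sᶜ : Finset V))) := by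
    ext i j
    rfl
  have hb12 : ((((adjMat G).submatrix (fun i : X => (i : V)) (fun j : (Xᶜ : Finset V) => (j : V))).submatrix id (fun j : {j : (Xᶜ : Finset V) // (j : V) ∉ S} => j.1)).submatrix (fun i : {i : X // (i : V) ∈ S} => i.1) id).rank ≤ cutRank G S := by
    rw [heq12, h12eq]
    exact rank_submatrix_le' ((adjMat G).submatrix (fun i : S => (i : V)) (fun j : (Sᶜ : Finset V) => (j : V))) (fun i : {i : X // (i : V) ∈ S} => (⟨i.1.1, i.2⟩ : S)) (fun j : {j : (Xᶜ : Finset V) // (j : V) ∉ S} => (⟨j.1.1, Finset.mem_compl.2 j.2⟩ : (Sᶜ : Finset V)))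

  have heq22 : ((((adjMat G).submatrix (fun i : X => (i : V)) (fun j : (Xᶜ : Finset V) => (j : V))).submatrix id (fun j : {j : (Xᶜ : Finset V) // (j : V) ∉ S} => j.1)).submatrix (fun i : {i : X // (i : V) ∉ S} => i.1) id) = ((adjMat G).submatrix (fun i : (S ∆ X : Finset V) => (i : V))
        (fun j : ((S ∆ X)ᶜ : Finset V) => (j : V))).submatrix (fun i : {i : X // (i : V) ∉ S} => (⟨i.1.1, by
        have h1 : (i.1.1 : V) ∈ X := i.1.2
        have h2 : (i.1.1 : V) ∉ S := i.2
        exact Finset.mem_symmDiff.2 (Or.inr ⟨h1, h2⟩)⟩ : (S ∆ X : Finset V))) (fun j : {j : (Xᶜ : Finset V) // (j : V) ∉ S} => (⟨j.1.1, by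
        have h1 : (j.1.1 : V) ∉ X := Finset.mem_compl.1 j.1.2
        have h2 : (j.1.1 : V) ∉ S := j.2
        exact Finset.mem_compl.2 (by simp [Finset.mem_symmDiff, h1, h2])⟩ : ((S ∆ X)ᶜ : Finset V))) := by
    ext i j
    rfl
  have hb22 : ((((adjMat G).submatrix (fun i : X => (i : V)) (fun j : (Xᶜ : Finset V) => (j : V))).submatrix id (fun j : {j : (Xᶜ : Finset V) // (j : V) ∉ S} => j.1)).submatrix (fun i : {i : X // (i : V) ∉ S} => i.1) id).rank ≤ cutRank G (S ∆ X) := by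
    rw [heq22, h22eq]
    exact rank_submatrix_le' ((adjMat G).submatrix (fun i : (S ∆ X : Finset V) => (i : V))
        (fun j : ((S ∆ X)ᶜ : Finset V) => (j : V))) (fun i : {i : X // (i : V) ∉ S} => (⟨i.1.1, by
        have h1 : (i.1.1 : V) ∈ X := i.1.2
        have h2 : (i.1.1 : V) ∉ S := i.2
        exact Finset.mem_symmDiff.2 (Or.inr ⟨h1, h2⟩)⟩ : (S ∆ X : Finset V))) (fun j : {j : (Xᶜ : Finset V) // (j : V) ∉ S} => (⟨j.1.1, by
        have h1 : (j.1.1 : V) ∉ X := Finset.mem_compl.1 j.1.2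
        have h2 : (j.1.1 : V) ∉ S := j.2
        exact Finset.mem_compl.2 (by simp [Finset.mem_symmDiff, h1, h2])⟩ : ((S ∆ X)ᶜ : Finset V)))

  have hX : cutRank G X = ((adjMat G).submatrix (fun i : X => (i : V)) (fun j : (Xᶜ : Finset V) => (j : V))).rank := hcut X
  omega

/-- For every graph, `maxρ(G) ≤ 4·Eρ(G)`. -/
theorem stmt14 {V : Type} [Fintype V] [DecidableEq V] (G : SimpleGraph V) :
    (maxCutRank G : ℝ) ≤ 4 * avgCutRank G := by
  obtain ⟨X, -, hX⟩ := Finset.exists_mem_eq_sup (Finset.univ : Finset (Finset V))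
    ⟨∅, Finset.mem_univ ∅⟩ (cutRank G)
  have h2 : ∑ S : Finset V, cutRank G (S ∆ X) = ∑ S : Finset V, cutRank G S :=
    Fintype.sum_bijective (· ∆ X)
      (Function.Involutive.bijective fun S => symmDiff_symmDiff_cancel_right X S)
      _ _ (fun S => rfl)
  have hkey : (2 ^ Fintype.card V) * cutRank G X ≤ 4 * ∑ S : Finset V, cutRank G S := by
    have h1 : ∑ _S : Finset V, cutRank G X
        ≤ ∑ S : Finset V, (2 * cutRank G S + 2 * cutRank G (S ∆ X)) :=
      Finset.sum_le_sum fun S _ => cutRank_le_core G X S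
    rw [Finset.sum_const, Finset.card_univ, Fintype.card_finset, smul_eq_mul,
      Finset.sum_add_distrib, ← Finset.mul_sum, ← Finset.mul_sum, h2] at h1
    omega
  have hmax : maxCutRank G = cutRank G X := hX
  rw [hmax, avgCutRank, ← mul_div_assoc, le_div_iff₀ (by positivity)]
  have hcast : ((2 ^ Fintype.card V) * cutRank G X : ℝ)
      ≤ 4 * ∑ S : Finset V, (cutRank G S : ℝ) := by
    exact_mod_cast hkey
  linarith [hcast]

end AvgCutRank
end

section
/- For every finite simple graph G, the neighborhood diversity satisfies nd(G) < 2^{2·maxρ(G) + 2}. -/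
open scoped Classical

namespace AvgCutRank

variable {V : Type*} {W : Type*}

section AuxProof

set_option linter.unusedSectionVars false

variable {V : Type} [Fintype V] [DecidableEq V]

lemma twinEq_symm {G : SimpleGraph V} {x y : V} (h : TwinEq G x y) : TwinEq G y x := by
  rcases h with h | h
  · exact Or.inl h.symm
  · exact Or.inr fun z hzy hzx => (h z hzx hzy).symm

lemma twinEq_trans {G : SimpleGraph V} {x y w : V} (h1 : TwinEq G x y) (h2 : TwinEq G y w) :
    TwinEq G x w := by
  rcases h1 with rfl | h1
  · exact h2
  rcases h2 with rfl | h2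
  · exact Or.inr h1
  by_cases hxw : x = w
  · exact Or.inl hxw
  by_cases hxy : x = y
  · subst hxy; exact Or.inr h2
  by_cases hyw : y = w
  · subst hyw; exact Or.inr h1
  refine Or.inr fun z hzx hzw => ?_
  by_cases hzy : z = y
  · have e1 : G.Adj x w ↔ G.Adj y w := h1 w (fun h => hxw h.symm) (fun h => hyw h.symm)
    have e2 : G.Adj y x ↔ G.Adj w x := h2 x hxy hxw
    rw [hzy, G.adj_comm x y, e2, G.adj_comm w x, e1, G.adj_comm y w]
  · exact (h1 z hzx hzy).trans (h2 z hzy hzw)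

lemma twinEq_class_eq {G : SimpleGraph V} {x y : V} (h : TwinEq G x y) :
    (Finset.univ.filter fun u => TwinEq G x u) = (Finset.univ.filter fun u => TwinEq G y u) := by
  ext u
  simp only [Finset.mem_filter, Finset.mem_univ, true_and]
  exact ⟨fun hx => twinEq_trans (twinEq_symm h) hx, fun hy => twinEq_trans h hy⟩

lemma exists_reps (G : SimpleGraph V) : ∃ R : Finset V, R.card = nd G ∧
    ∀ x ∈ R, ∀ y ∈ R, x ≠ y → ¬ TwinEq G x y := by
  set f : V → Finset V := fun u => Finset.univ.filter fun w => TwinEq G u w with hf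
  set I : Finset (Finset V) := Finset.univ.image f with hI
  have hrep : ∀ C ∈ I, ∃ a : V, f a = C := by
    intro C hC
    obtain ⟨a, -, ha⟩ := Finset.mem_image.mp hC
    exact ⟨a, ha⟩
  classical
  refine ⟨I.attach.image (fun C => (hrep C.1 C.2).choose), ?_, ?_⟩
  · rw [Finset.card_image_of_injOn, Finset.card_attach]
    · rfl
    · intro C1 _ C2 _ hcc
      have hcc' : (hrep C1.1 C1.2).choose = (hrep C2.1 C2.2).choose := hcc
      have e1 : f ((hrep C1.1 C1.2).choose) = C1.1 := (hrep C1.1 C1.2).choose_spec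
      have e2 : f ((hrep C2.1 C2.2).choose) = C2.1 := (hrep C2.1 C2.2).choose_spec
      apply Subtype.ext
      rw [← e1, ← e2, hcc']
  · intro a ha b hb hab htw
    obtain ⟨C1, -, hc1⟩ := Finset.mem_image.mp ha
    obtain ⟨C2, -, hc2⟩ := Finset.mem_image.mp hb
    have hc1' : (hrep C1.1 C1.2).choose = a := hc1
    have hc2' : (hrep C2.1 C2.2).choose = b := hc2
    apply hab
    have e1 : f a = C1.1 := by rw [← hc1']; exact (hrep C1.1 C1.2).choose_spec
    have e2 : f b = C2.1 := by rw [← hc2']; exact (hrep C2.1 C2.2).choose_spec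
    have : C1.1 = C2.1 := by rw [← e1, ← e2]; exact twinEq_class_eq htw
    rw [← hc1', ← hc2']
    exact congrArg (fun C : {u // u ∈ I} => (hrep C.1 C.2).choose) (Subtype.ext this)

/-- A configuration of the greedy rank-building process. -/
structure Conf (G : SimpleGraph V) (t : ℕ) (x z : Fin t → V) (R : Finset V) : Prop where
  xinj : Function.Injective x
  zinj : Function.Injective z
  xz : ∀ i j, x i ≠ z j
  xR : ∀ i, x i ∉ R
  zR : ∀ j, z j ∉ R
  tri_lt : ∀ i j : Fin t, j < i → ∀ r ∈ R, (G.Adj (x i) (z j) ↔ G.Adj r (z j))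
  tri_eq : ∀ i : Fin t, ∀ r ∈ R, ¬ (G.Adj (x i) (z i) ↔ G.Adj r (z i))
  patx : ∀ i, ∀ r ∈ R, ∀ s ∈ R, (G.Adj r (x i) ↔ G.Adj s (x i))
  patz : ∀ j, ∀ r ∈ R, ∀ s ∈ R, (G.Adj r (z j) ↔ G.Adj s (z j))
  nontwin : ∀ r ∈ R, ∀ s ∈ R, r ≠ s → ¬ TwinEq G r s

lemma conf_rank_le {G : SimpleGraph V} {t : ℕ} {x z : Fin t → V} {R : Finset V}
    (C : Conf G t x z R) {r : V} (hr : r ∈ R) : t ≤ maxCutRank G := by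
  set S : Finset V := (Finset.univ.image x) ∪ {r} with hS
  have hxS : ∀ i, x i ∈ S := fun i =>
    Finset.mem_union_left _ (Finset.mem_image_of_mem x (Finset.mem_univ i))
  have hrS : r ∈ S := Finset.mem_union_right _ (Finset.mem_singleton_self r)
  have hzS : ∀ j, z j ∈ (Sᶜ : Finset V) := by
    intro j
    rw [Finset.mem_compl]
    intro hmem
    rcases Finset.mem_union.mp hmem with h | h
    · obtain ⟨i, -, hi⟩ := Finset.mem_image.mp h
      exact C.xz i j hi
    · rw [Finset.mem_singleton] at h
      exact C.zR j (h ▸ hr)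
  set M : Matrix S (Sᶜ : Finset V) (ZMod 2) :=
    Matrix.of fun (i : S) (j : (Sᶜ : Finset V)) =>
      if G.Adj i.1 j.1 then (1 : ZMod 2) else 0 with hM
  have hcut : cutRank G S = M.rank := rfl
  set sx : Fin t → S := fun i => ⟨x i, hxS i⟩ with hsx
  set sr : S := ⟨r, hrS⟩ with hsr
  set sz : Fin t → (Sᶜ : Finset V) := fun j => ⟨z j, hzS j⟩ with hsz
  set N : Matrix (Fin t) S (ZMod 2) :=
    fun i s => (if s = sx i then 1 else 0) + (if s = sr then 1 else 0) with hN
  set P : Matrix (Sᶜ : Finset V) (Fin t) (ZMod 2) := fun j l => if j = sz l then 1 else 0 with hP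
  have hentry : ∀ i l, (N * M * P) i l =
      ((if G.Adj (x i) (z l) then (1 : ZMod 2) else 0) + (if G.Adj r (z l) then 1 else 0)) := by
    intro i l
    have h1 : (N * M) i = fun j => M (sx i) j + M sr j := by
      funext j
      rw [Matrix.mul_apply]
      simp [hN, add_mul, ite_mul, Finset.sum_add_distrib]
    rw [Matrix.mul_apply]
    simp only [h1, hP, mul_ite, mul_one, mul_zero]
    rw [Finset.sum_ite_eq' Finset.univ (sz l) (fun j => M (sx i) j + M sr j)]
    simp [hM, hsx, hsr, hsz]
  have htri : (N * M * P).BlockTriangular id := by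
    intro i l hl
    rw [hentry i l]
    have := C.tri_lt i l hl r hr
    by_cases h : G.Adj (x i) (z l)
    · rw [if_pos h, if_pos (this.mp h)]; decide
    · rw [if_neg h, if_neg (fun hc => h (this.mpr hc))]; decide
  have hdiag : ∀ i, (N * M * P) i i = 1 := by
    intro i
    rw [hentry i i]
    have := C.tri_eq i r hr
    by_cases h : G.Adj (x i) (z i)
    · have h2 : ¬ G.Adj r (z i) := fun hc => this ⟨fun _ => hc, fun _ => h⟩
      rw [if_pos h, if_neg h2]; decide
    · have h2 : G.Adj r (z i) := by
        by_contra hc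
        exact this ⟨fun hh => absurd hh h, fun hh => absurd hh hc⟩
      rw [if_neg h, if_pos h2]; decide
  have hdet : (N * M * P).det = 1 := by
    rw [Matrix.det_of_upperTriangular htri]
    simp [hdiag]
  have hrank : (N * M * P).rank = t := by
    rw [Matrix.rank_of_isUnit _ ((Matrix.isUnit_iff_isUnit_det _).mpr (hdet ▸ isUnit_one))]
    simp
  have hle1 : (N * M * P).rank ≤ (N * M).rank := Matrix.rank_mul_le_left _ _
  have hle2 : (N * M).rank ≤ M.rank := Matrix.rank_mul_le_right _ _
  have : t ≤ cutRank G S := by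
    rw [hcut, ← hrank]
    exact hle1.trans hle2
  exact this.trans (Finset.le_sup (Finset.mem_univ S))

lemma snoc_inj {α : Type*} {t : ℕ} {f : Fin t → α} {c : α} (hf : Function.Injective f)
    (hc : ∀ i, f i ≠ c) : Function.Injective (Fin.snoc f c) := by
  intro i j h
  induction i using Fin.lastCases with
  | last =>
    induction j using Fin.lastCases with
    | last => rfl
    | cast j' =>
      rw [Fin.snoc_last, Fin.snoc_castSucc] at h
      exact absurd h.symm (hc j')
  | cast i' =>
    induction j using Fin.lastCases with
    | last =>
      rw [Fin.snoc_last, Fin.snoc_castSucc] at h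
      exact absurd h (hc i')
    | cast j' =>
      rw [Fin.snoc_castSucc, Fin.snoc_castSucc] at h
      exact congrArg Fin.castSucc (hf h)

lemma conf_step {G : SimpleGraph V} {t : ℕ} {x z : Fin t → V} {R : Finset V}
    (C : Conf G t x z R) (hge : 2 ≤ R.card) :
    ∃ (x' z' : V) (R' : Finset V), Conf G (t + 1) (Fin.snoc x x') (Fin.snoc z z') R' ∧
      R.card ≤ 4 * R'.card + 1 ∧ R'.card < R.card := by
  obtain ⟨a0, ha0, b0, hb0, hab0⟩ := Finset.one_lt_card.mp hge
  have hnt := C.nontwin a0 ha0 b0 hb0 hab0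
  have hw : ∃ w, w ≠ a0 ∧ w ≠ b0 ∧ ¬ (G.Adj a0 w ↔ G.Adj b0 w) := by
    by_contra hc
    push_neg at hc
    exact hnt (Or.inr fun u hua hub => hc u hua hub)
  obtain ⟨w, hwa0, hwb0, hwd0⟩ := hw
  have main : ∀ a b : V, a ∈ R → b ∈ R → w ≠ a → w ≠ b →
      ¬ (G.Adj a w ↔ G.Adj b w) →
      (R.filter fun u => u ≠ w ∧ (G.Adj u w ↔ G.Adj b w)).card ≤
        (R.filter fun u => u ≠ w ∧ (G.Adj u w ↔ G.Adj a w)).card →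
      ∃ (x' z' : V) (R' : Finset V), Conf G (t + 1) (Fin.snoc x x') (Fin.snoc z z') R' ∧
        R.card ≤ 4 * R'.card + 1 ∧ R'.card < R.card := by
    intro a b ha hb hwa hwb hwd hcc
    set Aa := R.filter (fun u => u ≠ w ∧ (G.Adj u w ↔ G.Adj a w)) with hAa
    set Ab := R.filter (fun u => u ≠ w ∧ (G.Adj u w ↔ G.Adj b w)) with hAb
    have hcover : R ⊆ Aa ∪ Ab ∪ {w} := by
      intro u hu
      by_cases huw : u = w
      · exact Finset.mem_union_right _ (by simp [huw])
      by_cases hua : G.Adj u w ↔ G.Adj a w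
      · exact Finset.mem_union_left _
          (Finset.mem_union_left _ (Finset.mem_filter.mpr ⟨hu, huw, hua⟩))
      · refine Finset.mem_union_left _
          (Finset.mem_union_right _ (Finset.mem_filter.mpr ⟨hu, huw, ?_⟩))
        tauto
    have hcard1 : R.card ≤ Aa.card + Ab.card + 1 := by
      calc R.card ≤ (Aa ∪ Ab ∪ {w}).card := Finset.card_le_card hcover
        _ ≤ (Aa ∪ Ab).card + 1 := by
              have := Finset.card_union_le (Aa ∪ Ab) ({w} : Finset V)
              simpa using this
        _ ≤ Aa.card + Ab.card + 1 := by
              have := Finset.card_union_le Aa Ab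
              omega
    have hbAa : b ∉ Aa := by
      intro hmem
      exact hwd ((Finset.mem_filter.mp hmem).2.2.symm)
    obtain ⟨R', hsubAa, hpol, hhalf⟩ :
        ∃ R', R' ⊆ Aa ∧ (∀ r ∈ R', ∀ s ∈ R', (G.Adj r b ↔ G.Adj s b)) ∧
          Aa.card ≤ 2 * R'.card := by
      have hsplit := Finset.card_filter_add_card_filter_not
        (s := Aa) (p := fun u => G.Adj u b)
      rcases le_total ((Aa.filter fun u => G.Adj u b).card)
          ((Aa.filter fun u => ¬ G.Adj u b).card) with hh | hh
      · refine ⟨Aa.filter (fun u => ¬ G.Adj u b), Finset.filter_subset _ _, ?_, by omega⟩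
        intro r hrm s hsm
        exact iff_of_false (Finset.mem_filter.mp hrm).2 (Finset.mem_filter.mp hsm).2
      · refine ⟨Aa.filter (fun u => G.Adj u b), Finset.filter_subset _ _, ?_, by omega⟩
        intro r hrm s hsm
        exact iff_of_true (Finset.mem_filter.mp hrm).2 (Finset.mem_filter.mp hsm).2
    have hR'R : R' ⊆ R := hsubAa.trans (Finset.filter_subset _ _)
    have hmemAa : ∀ r ∈ R', r ≠ w ∧ (G.Adj r w ↔ G.Adj a w) := fun r hr =>
      (Finset.mem_filter.mp (hsubAa hr)).2
    have hbR' : b ∉ R' := fun hc => hbAa (hsubAa hc)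
    have hwx : ∀ i, w ≠ x i := by
      intro i he
      exact hwd (by rw [he]; exact C.patx i a ha b hb)
    have hwz : ∀ j, w ≠ z j := by
      intro j he
      exact hwd (by rw [he]; exact C.patz j a ha b hb)
    have hwR' : w ∉ R' := fun hc => (hmemAa w hc).1 rfl
    refine ⟨b, w, R', ?_, ?_, ?_⟩
    · constructor
      · exact snoc_inj C.xinj (fun i he => C.xR i (by rw [he]; exact hb))
      · exact snoc_inj C.zinj (fun j he => hwz j he.symm)
      · intro i j
        induction i using Fin.lastCases with
        | last =>
          induction j using Fin.lastCases with
          | last =>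
            rw [Fin.snoc_last, Fin.snoc_last]
            exact fun he => hwb he.symm
          | cast j' =>
            rw [Fin.snoc_last, Fin.snoc_castSucc]
            exact fun he => C.zR j' (by rw [← he]; exact hb)
        | cast i' =>
          induction j using Fin.lastCases with
          | last =>
            rw [Fin.snoc_last, Fin.snoc_castSucc]
            exact fun he => hwx i' he.symm
          | cast j' =>
            rw [Fin.snoc_castSucc, Fin.snoc_castSucc]
            exact C.xz i' j'
      · intro i
        induction i using Fin.lastCases with
        | last => rw [Fin.snoc_last]; exact hbR'
        | cast i' =>
          rw [Fin.snoc_castSucc]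
          exact fun hc => C.xR i' (hR'R hc)
      · intro j
        induction j using Fin.lastCases with
        | last => rw [Fin.snoc_last]; exact hwR'
        | cast j' =>
          rw [Fin.snoc_castSucc]
          exact fun hc => C.zR j' (hR'R hc)
      · intro i j hij r hr
        revert hij
        induction i using Fin.lastCases with
        | last =>
          induction j using Fin.lastCases with
          | last => intro hij; exact absurd hij (lt_irrefl _)
          | cast j' =>
            intro _
            rw [Fin.snoc_last, Fin.snoc_castSucc]
            exact C.patz j' b hb r (hR'R hr)
        | cast i' =>
          induction j using Fin.lastCases with
          | last =>
            intro hij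
            exact absurd (hij.trans (Fin.castSucc_lt_last i')) (lt_irrefl _)
          | cast j' =>
            intro hij
            rw [Fin.snoc_castSucc, Fin.snoc_castSucc]
            exact C.tri_lt i' j' (Fin.castSucc_lt_castSucc_iff.mp hij) r (hR'R hr)
      · intro i r hr
        induction i using Fin.lastCases with
        | last =>
          rw [Fin.snoc_last, Fin.snoc_last]
          intro hiff
          exact hwd ((hiff.trans (hmemAa r hr).2).symm)
        | cast i' =>
          rw [Fin.snoc_castSucc, Fin.snoc_castSucc]
          exact C.tri_eq i' r (hR'R hr)
      · intro i r hr s hs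
        induction i using Fin.lastCases with
        | last =>
          rw [Fin.snoc_last]
          exact hpol r hr s hs
        | cast i' =>
          rw [Fin.snoc_castSucc]
          exact C.patx i' r (hR'R hr) s (hR'R hs)
      · intro j r hr s hs
        induction j using Fin.lastCases with
        | last =>
          rw [Fin.snoc_last]
          exact ((hmemAa r hr).2).trans ((hmemAa s hs).2).symm
        | cast j' =>
          rw [Fin.snoc_castSucc]
          exact C.patz j' r (hR'R hr) s (hR'R hs)
      · exact fun r hr s hs hne => C.nontwin r (hR'R hr) s (hR'R hs) hne
    · omega
    · exact Finset.card_lt_card ((Finset.ssubset_iff_of_subset hR'R).mpr ⟨b, hb, hbR'⟩)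
  rcases le_total ((R.filter fun u => u ≠ w ∧ (G.Adj u w ↔ G.Adj b0 w)).card)
      ((R.filter fun u => u ≠ w ∧ (G.Adj u w ↔ G.Adj a0 w)).card) with h | h
  · exact main a0 b0 ha0 hb0 hwa0 hwb0 hwd0 h
  · exact main b0 a0 hb0 ha0 hwb0 hwa0 (fun hh => hwd0 hh.symm) h

def Dfun : ℕ → ℕ
  | 0 => 0
  | (j+1) => 4 * Dfun j + 2

lemma Dfun_lt_pow : ∀ j, Dfun j < 4 ^ j
  | 0 => by simp [Dfun]
  | (j+1) => by
      have := Dfun_lt_pow j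
      have h4 : (4:ℕ) ^ (j+1) = 4 * 4 ^ j := by ring
      simp only [Dfun]
      omega

lemma conf_card_le {G : SimpleGraph V} :
    ∀ n {t : ℕ} {x z : Fin t → V} {R : Finset V}, Conf G t x z R → R.card = n →
      R.card ≤ Dfun (maxCutRank G + 1 - t) := by
  intro n
  induction n using Nat.strong_induction_on with
  | _ n ih =>
    intro t x z R C hcard
    rcases Nat.eq_zero_or_pos R.card with h0 | hpos
    · simp [h0]
    obtain ⟨r, hr⟩ := Finset.card_pos.mp hpos
    have ht : t ≤ maxCutRank G := conf_rank_le C hr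
    have hsub : maxCutRank G + 1 - t = (maxCutRank G - t) + 1 := by omega
    rcases lt_or_ge R.card 2 with hlt | hge2
    · rw [hsub]
      simp only [Dfun]
      omega
    obtain ⟨x', z', R', C', hle, hlt'⟩ := conf_step C hge2
    have hrec := ih R'.card (by omega) C' rfl
    have he : maxCutRank G + 1 - (t+1) = maxCutRank G - t := by omega
    rw [he] at hrec
    rw [hsub]
    simp only [Dfun]
    omega

end AuxProof

/-- For every graph, `nd(G) < 2^(2·maxρ(G) + 2)`. -/
theorem stmt15 {V : Type} [Fintype V] [DecidableEq V] (G : SimpleGraph V) :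
    nd G < 2 ^ (2 * maxCutRank G + 2) := by
  obtain ⟨R, hcard, hpair⟩ := exists_reps G
  have C0 : Conf G 0 (fun i => i.elim0) (fun i => i.elim0) R := by
    refine ⟨?_, ?_, ?_, ?_, ?_, ?_, ?_, ?_, ?_, ?_⟩
    · intro i; exact i.elim0
    · intro i; exact i.elim0
    · intro i; exact i.elim0
    · intro i; exact i.elim0
    · intro i; exact i.elim0
    · intro i; exact i.elim0
    · intro i; exact i.elim0
    · intro i; exact i.elim0
    · intro i; exact i.elim0
    · exact hpair
  have hb := conf_card_le (G := G) R.card C0 rfl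
  simp only [Nat.sub_zero] at hb
  have h4 : Dfun (maxCutRank G + 1) < 4 ^ (maxCutRank G + 1) := Dfun_lt_pow _
  have hpow : (4:ℕ) ^ (maxCutRank G + 1) = 2 ^ (2 * maxCutRank G + 2) := by
    rw [show (4:ℕ) = 2^2 from rfl, ← pow_mul, Nat.mul_succ]
  calc nd G = R.card := hcard.symm
    _ ≤ Dfun (maxCutRank G + 1) := hb
    _ < 4 ^ (maxCutRank G + 1) := h4
    _ = 2 ^ (2 * maxCutRank G + 2) := hpow

end AvgCutRank
end

section
/- Let k ≥ 0 be an integer and let G be a finite simple graph such that maxρ(G) > k and maxρ(G − v) ≤ k for every vertex v of G. Then |V(G)| = 2k + 2. -/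
open scoped Classical


section AuxSpanRank

open Submodule Module Matrix

section SpanLemmas

variable {F : Type*} [Field F] {M : Type*} [AddCommGroup M] [Module F M]
  [FiniteDimensional F M] {ι : Type*}

lemma finrank_span_le_restrict_add_one (v : ι → M) (i₀ : ι) :
    finrank F (span F (Set.range v)) ≤
      finrank F (span F (Set.range fun i : {i // i ≠ i₀} => v i.1)) + 1 := by
  have hsub : Set.range v ⊆
      ((span F (Set.range fun i : {i // i ≠ i₀} => v i.1)) ⊔ span F {v i₀} : Submodule F M) := by
    rintro _ ⟨i, rfl⟩
    by_cases h : i = i₀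
    · subst h; exact Submodule.mem_sup_right (subset_span rfl)
    · exact Submodule.mem_sup_left (subset_span ⟨⟨i, h⟩, rfl⟩)
  calc finrank F (span F (Set.range v))
      ≤ finrank F ((span F (Set.range fun i : {i // i ≠ i₀} => v i.1)) ⊔ span F {v i₀} :
        Submodule F M) := Submodule.finrank_mono (span_le.mpr hsub)
    _ ≤ finrank F (span F (Set.range fun i : {i // i ≠ i₀} => v i.1)) +
        finrank F (span F ({v i₀} : Set M)) :=
        Submodule.finrank_add_le_finrank_add_finrank _ _
    _ ≤ _ + 1 := by
        gcongr
        exact (finrank_span_le_card ({v i₀} : Set M)).trans (by simp)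

lemma exists_span_restrict_eq [Fintype ι] (v : ι → M)
    (h : finrank F (span F (Set.range v)) < Fintype.card ι) :
    ∃ i₀ : ι, span F (Set.range fun i : {i // i ≠ i₀} => v i.1) = span F (Set.range v) := by
  have hdep : ¬ LinearIndependent F v := fun hli => by
    rw [finrank_span_eq_card hli] at h; exact lt_irrefl _ h
  rw [Fintype.not_linearIndependent_iff] at hdep
  obtain ⟨g, hsum, i₀, hg⟩ := hdep
  refine ⟨i₀, le_antisymm (span_mono (by rintro _ ⟨i, rfl⟩; exact ⟨i.1, rfl⟩)) ?_⟩
  rw [span_le]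
  rintro _ ⟨i, rfl⟩
  by_cases hi : i = i₀
  · subst hi
    have hmem : ∀ j ∈ Finset.univ.erase i, g j • v j ∈
        span F (Set.range fun i' : {i' // i' ≠ i} => v i'.1) := by
      intro j hj
      exact Submodule.smul_mem _ _ (subset_span ⟨⟨j, (Finset.mem_erase.mp hj).1⟩, rfl⟩)
    have h1 : g i • v i = - ∑ j ∈ Finset.univ.erase i, g j • v j := by
      rw [eq_neg_iff_add_eq_zero, ← Finset.add_sum_erase _ _ (Finset.mem_univ i)] at *
      exact hsum
    have h2 : v i = (g i)⁻¹ • (g i • v i) := by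
      rw [smul_smul, inv_mul_cancel₀ hg, one_smul]
    rw [h2, h1]
    exact Submodule.smul_mem _ _ (Submodule.neg_mem _ (Submodule.sum_mem _ hmem))
  · exact subset_span ⟨⟨i, hi⟩, rfl⟩

end SpanLemmas

section MatrixLemmas

variable {F : Type*} [Field F] {m n m' n' : Type*} [Fintype m] [Fintype n]

lemma rank_reindex' [Fintype n'] (e₁ : m ≃ m') (e₂ : n ≃ n') (A : Matrix m n F) :
    ((Matrix.reindex e₁ e₂) A).rank = A.rank := by
  rw [Matrix.rank, Matrix.rank, Matrix.mulVecLin_reindex, LinearMap.range_comp,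
    LinearMap.range_comp, LinearEquiv.range, Submodule.map_top, LinearEquiv.finrank_map_eq]

lemma rank_submatrix' [Fintype n'] (e₁ : m' ≃ m) (e₂ : n' ≃ n) (A : Matrix m n F) :
    (A.submatrix e₁ e₂).rank = A.rank := by
  have : A.submatrix e₁ e₂ = (Matrix.reindex e₁.symm e₂.symm) A := rfl
  rw [this, rank_reindex']

lemma rank_le_deleteRow_add_one (A : Matrix m n F) (i₀ : m) :
    A.rank ≤ (A.submatrix (fun i : {i // i ≠ i₀} => i.1) (id : n → n)).rank + 1 := by
  rw [Matrix.rank_eq_finrank_span_row, Matrix.rank_eq_finrank_span_row]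
  exact finrank_span_le_restrict_add_one A i₀

lemma exists_rank_deleteRow_eq (A : Matrix m n F) (h : A.rank < Fintype.card m) :
    ∃ i₀ : m, (A.submatrix (fun i : {i // i ≠ i₀} => i.1) (id : n → n)).rank = A.rank := by
  rw [Matrix.rank_eq_finrank_span_row] at h
  obtain ⟨i₀, hi₀⟩ := exists_span_restrict_eq (A : m → n → F) h
  refine ⟨i₀, ?_⟩
  have hr : Set.range (A.submatrix (fun i : {i // i ≠ i₀} => i.1) (id : n → n)).row
      = Set.range (fun i : {i // i ≠ i₀} => A i.1) := rfl
  rw [Matrix.rank_eq_finrank_span_row, Matrix.rank_eq_finrank_span_row, hr, hi₀]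
  rfl

lemma rank_le_deleteCol_add_one (A : Matrix m n F) (j₀ : n) :
    A.rank ≤ (A.submatrix (id : m → m) (fun j : {j // j ≠ j₀} => j.1)).rank + 1 := by
  have h := rank_le_deleteRow_add_one Aᵀ j₀
  have ht : Aᵀ.submatrix (fun j : {j // j ≠ j₀} => j.1) (id : m → m)
      = (A.submatrix (id : m → m) (fun j : {j // j ≠ j₀} => j.1))ᵀ := rfl
  rwa [Matrix.rank_transpose, ht, Matrix.rank_transpose] at h

lemma exists_rank_deleteCol_eq (A : Matrix m n F) (h : A.rank < Fintype.card n) :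
    ∃ j₀ : n, (A.submatrix (id : m → m) (fun j : {j // j ≠ j₀} => j.1)).rank = A.rank := by
  have h' : Aᵀ.rank < Fintype.card n := by rwa [Matrix.rank_transpose]
  obtain ⟨j₀, hj₀⟩ := exists_rank_deleteRow_eq Aᵀ h'
  refine ⟨j₀, ?_⟩
  have ht : Aᵀ.submatrix (fun j : {j // j ≠ j₀} => j.1) (id : m → m)
      = (A.submatrix (id : m → m) (fun j : {j // j ≠ j₀} => j.1))ᵀ := rfl
  rwa [ht, Matrix.rank_transpose, Matrix.rank_transpose] at hj₀

end MatrixLemmas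

end AuxSpanRank

namespace AvgCutRank

variable {V : Type*} {W : Type*}

lemma rank_eq_of_instances {m n R : Type*} [CommRing R] (i1 i2 : Fintype n) (A : Matrix m n R) :
    @Matrix.rank m n R i1 _ A = @Matrix.rank m n R i2 _ A := by
  cases Subsingleton.elim i1 i2; rfl


lemma cutRank_deleteVert_mem {V : Type} [Fintype V] [DecidableEq V] (G : SimpleGraph V) (X : Finset V) {v : V} (hv : v ∈ X) :
    cutRank (deleteVert G v) (X.subtype (· ≠ v)) =
      ((Matrix.of fun (i : X) (j : (Xᶜ : Finset V)) =>
          if G.Adj i.1 j.1 then (1 : ZMod 2) else 0).submatrix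
        (fun i : {i : X // i ≠ ⟨v, hv⟩} => i.1) id).rank := by
  let e₁ : ((X.subtype (· ≠ v)) : Finset {w : V // w ≠ v}) ≃ {i : X // i ≠ ⟨v, hv⟩} :=
    { toFun := fun a => ⟨⟨a.1.1, by
        have ha := a.2; rw [Finset.mem_subtype] at ha; exact ha⟩,
        fun h => a.1.2 (congrArg Subtype.val h)⟩
      invFun := fun b => ⟨⟨b.1.1, fun h => b.2 (Subtype.ext h)⟩, by
        rw [Finset.mem_subtype]; exact b.1.2⟩
      left_inv := fun a => rfl
      right_inv := fun b => rfl }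
  let e₂ : (((X.subtype (· ≠ v))ᶜ : Finset {w : V // w ≠ v}) : Type) ≃ ((Xᶜ : Finset V) : Type) :=
    { toFun := fun b => ⟨b.1.1, by
        have hb := b.2
        rw [Finset.mem_compl, Finset.mem_subtype] at hb
        exact Finset.mem_compl.mpr hb⟩
      invFun := fun c => ⟨⟨c.1, fun h => Finset.mem_compl.mp c.2 (h ▸ hv)⟩, by
        rw [Finset.mem_compl, Finset.mem_subtype]
        exact Finset.mem_compl.mp c.2⟩
      left_inv := fun a => rfl
      right_inv := fun b => rfl }
  have hN : (Matrix.of fun (i : (X.subtype (· ≠ v) : Finset {w : V // w ≠ v}))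
        (j : (((X.subtype (· ≠ v))ᶜ : Finset {w : V // w ≠ v}))) =>
        if (deleteVert G v).Adj i.1 j.1 then (1 : ZMod 2) else 0)
      = ((Matrix.of fun (i : X) (j : (Xᶜ : Finset V)) =>
          if G.Adj i.1 j.1 then (1 : ZMod 2) else 0).submatrix
        (fun i : {i : X // i ≠ ⟨v, hv⟩} => i.1) id).submatrix e₁ e₂ := by
    ext i j; rfl
  rw [cutRank, hN, rank_submatrix']

lemma cutRank_deleteVert_notMem {V : Type} [Fintype V] [DecidableEq V] (G : SimpleGraph V) (X : Finset V) {v : V} (hv : v ∉ X) :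
    cutRank (deleteVert G v) (X.subtype (· ≠ v)) =
      ((Matrix.of fun (i : X) (j : (Xᶜ : Finset V)) =>
          if G.Adj i.1 j.1 then (1 : ZMod 2) else 0).submatrix id
        (fun j : {j : (Xᶜ : Finset V) // j ≠ ⟨v, Finset.mem_compl.mpr hv⟩} => j.1)).rank := by
  let e₁ : ((X.subtype (· ≠ v)) : Finset {w : V // w ≠ v}) ≃ (X : Finset V) :=
    { toFun := fun a => ⟨a.1.1, by
        have ha := a.2; rw [Finset.mem_subtype] at ha; exact ha⟩
      invFun := fun b => ⟨⟨b.1, fun h => hv (h ▸ b.2)⟩, by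
        rw [Finset.mem_subtype]; exact b.2⟩
      left_inv := fun a => rfl
      right_inv := fun b => rfl }
  let e₂ : (((X.subtype (· ≠ v))ᶜ : Finset {w : V // w ≠ v}) : Type) ≃
      {j : (Xᶜ : Finset V) // j ≠ ⟨v, Finset.mem_compl.mpr hv⟩} :=
    { toFun := fun b => ⟨⟨b.1.1, by
        have hb := b.2
        rw [Finset.mem_compl, Finset.mem_subtype] at hb
        exact Finset.mem_compl.mpr hb⟩,
        fun h => b.1.2 (congrArg Subtype.val h)⟩
      invFun := fun c => ⟨⟨c.1.1, fun h => c.2 (Subtype.ext h)⟩, by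
        rw [Finset.mem_compl, Finset.mem_subtype]
        exact Finset.mem_compl.mp c.1.2⟩
      left_inv := fun a => rfl
      right_inv := fun b => rfl }
  have hN : (Matrix.of fun (i : (X.subtype (· ≠ v) : Finset {w : V // w ≠ v}))
        (j : (((X.subtype (· ≠ v))ᶜ : Finset {w : V // w ≠ v}))) =>
        if (deleteVert G v).Adj i.1 j.1 then (1 : ZMod 2) else 0)
      = ((Matrix.of fun (i : X) (j : (Xᶜ : Finset V)) =>
          if G.Adj i.1 j.1 then (1 : ZMod 2) else 0).submatrix id
        (fun j : {j : (Xᶜ : Finset V) // j ≠ ⟨v, Finset.mem_compl.mpr hv⟩} => j.1)).submatrix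
          e₁ e₂ := by
    ext i j; rfl
  rw [cutRank, hN, rank_submatrix']


theorem stmt18 {V : Type} [Fintype V] [DecidableEq V] (G : SimpleGraph V) (k : ℕ)
    (h1 : k < maxCutRank G) (h2 : ∀ v : V, maxCutRank (deleteVert G v) ≤ k) :
    Fintype.card V = 2 * k + 2 := by
  rw [maxCutRank] at h1
  obtain ⟨X, -, hX⟩ := Finset.lt_sup_iff.mp h1
  set M : Matrix ((X : Finset V) : Type) (((Xᶜ : Finset V)) : Type) (ZMod 2) :=
    Matrix.of fun i j => if G.Adj i.1 j.1 then (1 : ZMod 2) else 0 with hMdef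
  have hcut : cutRank G X = M.rank := rfl
  rw [hcut] at hX
  have hrowle : ∀ i₀ : ((X : Finset V) : Type),
      (M.submatrix (fun i : {i // i ≠ i₀} => i.1) (id : _ → _)).rank ≤ k := by
    intro i₀
    have hb := cutRank_deleteVert_mem G X i₀.2
    have hle : cutRank (deleteVert G i₀.1) (X.subtype (· ≠ i₀.1)) ≤ k :=
      le_trans (Finset.le_sup (Finset.mem_univ _)) (h2 i₀.1)
    rw [hb] at hle
    exact hle
  have hcolle : ∀ j₀ : (((Xᶜ : Finset V)) : Type),
      (M.submatrix (id : _ → _) (fun j : {j // j ≠ j₀} => j.1)).rank ≤ k := by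
    intro j₀
    have hj : j₀.1 ∉ X := Finset.mem_compl.mp j₀.2
    have hb := cutRank_deleteVert_notMem G X hj
    have hle : cutRank (deleteVert G j₀.1) (X.subtype (· ≠ j₀.1)) ≤ k :=
      le_trans (Finset.le_sup (Finset.mem_univ _)) (h2 j₀.1)
    rw [hb] at hle
    exact hle
  have hne : Nonempty ((X : Finset V) : Type) := by
    rw [← Fintype.card_pos_iff]
    by_contra h
    push_neg at h
    have := Matrix.rank_le_card_height M
    omega
  obtain ⟨i₀⟩ := hne
  have h5 : M.rank ≤ k + 1 := by
    have h6 := rank_le_deleteRow_add_one M i₀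
    have h7 := hrowle i₀
    omega
  have hXcard : X.card = k + 1 := by
    have hge : M.rank ≤ Fintype.card ((X : Finset V) : Type) := Matrix.rank_le_card_height M
    rw [Fintype.card_coe] at hge
    by_contra hcon
    have hlt : M.rank < Fintype.card ((X : Finset V) : Type) := by
      rw [Fintype.card_coe]; omega
    obtain ⟨r₀, hr₀⟩ := exists_rank_deleteRow_eq M hlt
    have h9 := hrowle r₀
    rw [hr₀] at h9
    omega
  have hXccard : Xᶜ.card = k + 1 := by
    have hge : M.rank ≤ Fintype.card (((Xᶜ : Finset V)) : Type) := Matrix.rank_le_card_width M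
    rw [Fintype.card_coe] at hge
    by_contra hcon
    have hlt : M.rank < Fintype.card (((Xᶜ : Finset V)) : Type) := by
      rw [Fintype.card_coe]; omega
    obtain ⟨c₀, hc₀⟩ := exists_rank_deleteCol_eq M hlt
    have h9 := hcolle c₀
    have h10 : M.rank ≤ k := by
      rw [← hc₀]
      exact le_of_eq_of_le (rank_eq_of_instances _ _ _) h9
    omega
  have hsum := Finset.card_add_card_compl X
  omega


end AvgCutRank
end

section
/- If G is a connected finite simple graph having no vertex-minor isomorphic to the path on 4 vertices (a path of length three), then G is isomorphic to a star or to a complete graph. -/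
open scoped Classical

namespace AvgCutRank

variable {V : Type*} {W : Type*}

section Stmt19Proof

lemma isVertexMinor_of_localComp {W : Type*} (H : SimpleGraph W) (G : SimpleGraph V) (v : V)
    (h : IsVertexMinor H (localComp G v)) : IsVertexMinor H G := by
  obtain ⟨G', s, hle, hiso⟩ := h
  exact ⟨G', s, Relation.ReflTransGen.head ⟨v, rfl⟩ hle, hiso⟩

lemma vmP4 (G : SimpleGraph V) (a b c d : V)
    (nab : a ≠ b) (nac : a ≠ c) (nad : a ≠ d) (nbc : b ≠ c) (nbd : b ≠ d) (ncd : c ≠ d)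
    (hab : G.Adj a b) (hbc : G.Adj b c) (hcd : G.Adj c d)
    (hac : ¬ G.Adj a c) (had : ¬ G.Adj a d) (hbd : ¬ G.Adj b d) :
    IsVertexMinor (SimpleGraph.pathGraph 4) G := by
  classical
  refine ⟨G, {a, b, c, d}, Relation.ReflTransGen.refl, ⟨?_⟩⟩
  have ha : a ∈ ({a,b,c,d} : Set V) := by simp
  have hb : b ∈ ({a,b,c,d} : Set V) := by simp
  have hc : c ∈ ({a,b,c,d} : Set V) := by simp
  have hd : d ∈ ({a,b,c,d} : Set V) := by simp
  have hca : ¬ G.Adj c a := fun h => hac h.symm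
  have hda : ¬ G.Adj d a := fun h => had h.symm
  have hdb : ¬ G.Adj d b := fun h => hbd h.symm
  refine ⟨⟨![⟨a,ha⟩,⟨b,hb⟩,⟨c,hc⟩,⟨d,hd⟩],
    fun v => if v.1 = a then 0 else if v.1 = b then 1 else if v.1 = c then 2 else 3, ?_, ?_⟩, ?_⟩
  · intro i
    fin_cases i <;>
      simp [nab, nac, nad, nbc, nbd, ncd, nab.symm, nac.symm, nad.symm, nbc.symm, nbd.symm,
        ncd.symm]
  · rintro ⟨v, hv⟩
    simp only [Set.mem_insert_iff, Set.mem_singleton_iff] at hv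
    rcases hv with rfl | rfl | rfl | rfl <;>
      simp [nab, nac, nad, nbc, nbd, ncd, nab.symm, nac.symm, nad.symm, nbc.symm, nbd.symm,
        ncd.symm]
  · intro i j
    fin_cases i <;> fin_cases j <;>
      simp [SimpleGraph.pathGraph_adj, hab, hbc, hcd, hab.symm, hbc.symm, hcd.symm,
        hac, had, hbd, hca, hda, hdb, G.irrefl] <;> decide

lemma vmPaw (G : SimpleGraph V) (a b c d : V) (nac : a ≠ c) (nad : a ≠ d)
    (hab : G.Adj a b) (hbc : G.Adj b c) (hbd : G.Adj b d) (hcd : G.Adj c d)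
    (hac : ¬ G.Adj a c) (had : ¬ G.Adj a d) :
    IsVertexMinor (SimpleGraph.pathGraph 4) G := by
  apply isVertexMinor_of_localComp _ G d
  have hda : ¬ G.Adj d a := fun h => had h.symm
  have hdb : G.Adj d b := hbd.symm
  have hdc : G.Adj d c := hcd.symm
  have hdd : ¬ G.Adj d d := G.irrefl
  refine vmP4 (localComp G d) a b d c hab.ne nad nac hbd.ne hbc.ne (Ne.symm hcd.ne)
    ⟨hab.ne, by tauto⟩ ⟨hbd.ne, by tauto⟩ ⟨Ne.symm hcd.ne, by tauto⟩ ?_ ?_ ?_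
  · rintro ⟨-, h⟩; tauto
  · rintro ⟨-, h⟩; tauto
  · rintro ⟨-, h⟩; tauto

lemma vmDiamond (G : SimpleGraph V) (a b c d : V) (nac : a ≠ c)
    (hab : G.Adj a b) (hbc : G.Adj b c) (hcd : G.Adj c d) (had : G.Adj a d) (hbd : G.Adj b d)
    (hac : ¬ G.Adj a c) :
    IsVertexMinor (SimpleGraph.pathGraph 4) G := by
  apply isVertexMinor_of_localComp _ G b
  have hba : G.Adj b a := hab.symm
  have hbb : ¬ G.Adj b b := G.irrefl
  have hda : G.Adj d a := had.symm
  have hdc : G.Adj d c := hcd.symm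
  have hdb : G.Adj d b := hbd.symm
  refine vmPaw (localComp G b) d b a c (Ne.symm had.ne) (Ne.symm hcd.ne)
    ⟨Ne.symm hbd.ne, by tauto⟩ ⟨Ne.symm hab.ne, by tauto⟩ ⟨hbc.ne, by tauto⟩
    ⟨nac, by tauto⟩ ?_ ?_
  · rintro ⟨-, h⟩; tauto
  · rintro ⟨-, h⟩; tauto

lemma vmC4 (G : SimpleGraph V) (a b c d : V) (nac : a ≠ c) (nbd : b ≠ d)
    (hab : G.Adj a b) (hbc : G.Adj b c) (hcd : G.Adj c d) (hda : G.Adj d a)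
    (hac : ¬ G.Adj a c) (hbd : ¬ G.Adj b d) :
    IsVertexMinor (SimpleGraph.pathGraph 4) G := by
  apply isVertexMinor_of_localComp _ G a
  have haa : ¬ G.Adj a a := G.irrefl
  have had : G.Adj a d := hda.symm
  refine vmDiamond (localComp G a) a b c d nac
    ⟨hab.ne, by tauto⟩ ⟨hbc.ne, by tauto⟩ ⟨hcd.ne, by tauto⟩ ⟨Ne.symm hda.ne, by tauto⟩
    ⟨nbd, by tauto⟩ ?_
  rintro ⟨-, h⟩; tauto

lemma chainLemma (G : SimpleGraph V) {y f : V} (hr : G.Reachable y f)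
    (hne : f ≠ y) (hadj : ¬ G.Adj y f) :
    ∃ p q, G.Adj y p ∧ G.Adj p q ∧ ¬ G.Adj y q ∧ q ≠ y := by
  obtain ⟨W⟩ := hr
  suffices h : ∀ (u f' : V) (W : G.Walk u f'), (G.Adj y u ∨ u = y) → ¬ G.Adj y f' → f' ≠ y →
      ∃ p q, G.Adj y p ∧ G.Adj p q ∧ ¬ G.Adj y q ∧ q ≠ y from h y f W (Or.inr rfl) hadj hne
  intro u f' W
  induction W with
  | nil =>
    rintro (h | rfl) hadj' hne'
    · exact absurd h hadj'
    · exact absurd rfl hne'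
  | @cons u₁ u₂ f₂ h W ih =>
    intro hu hadj' hne'
    by_cases h1 : G.Adj y u₂ ∨ u₂ = y
    · exact ih h1 hadj' hne'
    · push_neg at h1
      rcases hu with hu | rfl
      · exact ⟨u₁, u₂, hu, h, h1.1, h1.2⟩
      · exact absurd h h1.1

lemma caseW (G : SimpleGraph V) (x y z w : V)
    (hxy : G.Adj x y) (hyz : G.Adj y z) (hxz : ¬ G.Adj x z) (nxz : x ≠ z)
    (nwx : w ≠ x) (nwy : w ≠ y) (nwz : w ≠ z) (hwx : G.Adj w x) :
    IsVertexMinor (SimpleGraph.pathGraph 4) G := by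
  by_cases hwy : G.Adj w y <;> by_cases hwz : G.Adj w z
  · exact vmDiamond G x y z w nxz hxy hyz hwz.symm hwx.symm hwy.symm hxz
  · exact vmPaw G z y x w nxz.symm (Ne.symm nwz) hyz.symm hxy.symm hwy.symm hwx.symm
      (fun h => hxz h.symm) (fun h => hwz h.symm)
  · exact vmC4 G x y z w nxz (Ne.symm nwy) hxy hyz hwz.symm hwx hxz (fun h => hwy h.symm)
  · exact vmP4 G w x y z nwx nwy nwz hxy.ne nxz hyz.ne hwx hxy hyz hwy hwz hxz

end Stmt19Proof

/-- A connected graph with no vertex-minor isomorphic to the path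
on four vertices is a star or a complete graph. -/
theorem stmt19 {V : Type} [Fintype V] [DecidableEq V] (G : SimpleGraph V)
    (hconn : G.Connected) (hpm : ¬ IsVertexMinor (SimpleGraph.pathGraph 4) G) :
    (∃ c : V, ∀ x y : V, G.Adj x y ↔ (x = c ∨ y = c) ∧ x ≠ y) ∨
    (∀ x y : V, x ≠ y → G.Adj x y) := by
  by_contra hcon
  push_neg at hcon
  obtain ⟨hstar, u, v, huv, hnadj⟩ := hcon
  obtain ⟨p, q, hup, hpq, hnuq, hqu⟩ := chainLemma G (hconn.preconnected u v) (Ne.symm huv) hnadj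
  apply hpm
  by_cases hW : ∃ w, w ≠ u ∧ w ≠ p ∧ w ≠ q ∧ (G.Adj w u ∨ G.Adj w q)
  · obtain ⟨w, h1, h2, h3, h4 | h4⟩ := hW
    · exact caseW G u p q w hup hpq hnuq (Ne.symm hqu) h1 h2 h3 h4
    · exact caseW G q p u w hpq.symm hup.symm (fun h => hnuq h.symm) hqu h3 h2 h1 h4
  push_neg at hW
  by_cases hF : ∀ w, w ≠ u → w ≠ p → w ≠ q → G.Adj p w
  · by_cases hE : ∃ w w', w ≠ u ∧ w ≠ p ∧ w ≠ q ∧ w' ≠ u ∧ w' ≠ p ∧ w' ≠ q ∧ G.Adj w w'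
    · obtain ⟨w, w', a1, a2, a3, b1, b2, b3, hww⟩ := hE
      exact vmPaw G u p w w' (Ne.symm a1) (Ne.symm b1) hup (hF w a1 a2 a3) (hF w' b1 b2 b3) hww
        (fun h => (hW w a1 a2 a3).1 h.symm) (fun h => (hW w' b1 b2 b3).1 h.symm)
    · exfalso
      push_neg at hE
      rcases hstar p with ⟨a, b, ⟨hadj, himp⟩ | ⟨hnab, hmem, hneab⟩⟩
      · refine hadj.ne (himp ?_)
        by_contra hcc
        push_neg at hcc
        obtain ⟨hap, hbp⟩ := hcc
        rcases eq_or_ne u a with rfl | ha1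
        · rcases eq_or_ne u b with rfl | hb1
          · exact hadj.ne rfl
          rcases eq_or_ne q b with rfl | hb3
          · exact hnuq hadj
          · exact (hW b (Ne.symm hb1) hbp (Ne.symm hb3)).1 hadj.symm
        rcases eq_or_ne q a with rfl | ha3
        · rcases eq_or_ne u b with rfl | hb1
          · exact hnuq hadj.symm
          rcases eq_or_ne q b with rfl | hb3
          · exact hadj.ne rfl
          · exact (hW b (Ne.symm hb1) hbp (Ne.symm hb3)).2 hadj.symm
        rcases eq_or_ne u b with rfl | hb1
        · exact (hW a (Ne.symm ha1) hap (Ne.symm ha3)).1 hadj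
        rcases eq_or_ne q b with rfl | hb3
        · exact (hW a (Ne.symm ha1) hap (Ne.symm ha3)).2 hadj
        exact hE a b (Ne.symm ha1) hap (Ne.symm ha3) (Ne.symm hb1) hbp (Ne.symm hb3) hadj
      · apply hnab
        rcases hmem with rfl | rfl
        · rcases eq_or_ne b u with rfl | h1
          · exact hup.symm
          rcases eq_or_ne b q with rfl | h3
          · exact hpq
          · exact hF b h1 (Ne.symm hneab) h3
        · rcases eq_or_ne a u with rfl | h1
          · exact hup
          rcases eq_or_ne a q with rfl | h3
          · exact hpq.symm
          · exact (hF a h1 hneab h3).symm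
  · push_neg at hF
    obtain ⟨f, f1, f2, f3, hpf⟩ := hF
    obtain ⟨r, s, hpr, hrs, hnps, hsp⟩ := chainLemma G (hconn.preconnected p f) f2 hpf
    have hsu : s ≠ u := by rintro rfl; exact hnps hup.symm
    have hsq : s ≠ q := by rintro rfl; exact hnps hpq
    have hru : r ≠ u := by rintro rfl; exact (hW s hsu hsp hsq).1 hrs.symm
    have hrq : r ≠ q := by rintro rfl; exact (hW s hsu hsp hsq).2 hrs.symm
    have hrp : r ≠ p := Ne.symm hpr.ne
    exact vmP4 G u p r s hup.ne (Ne.symm hru) (Ne.symm hsu) hpr.ne (Ne.symm hsp) hrs.ne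
      hup hpr hrs (fun h => (hW r hru hrp hrq).1 h.symm) (fun h => (hW s hsu hsp hsq).1 h.symm)
      hnps


end AvgCutRank
end
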